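/- arXiv:2511.16608 — 4 statements merged into one kernel-verified Lean document; each statement's English description precedes it below -/
import Mathlib

section
/- Let Γ be a finite Eulerian poset of positive rank with natural rank function ρ_Γ, and let Γ′ be a finite lower Eulerian poset with natural rank function ρ_{Γ′}. Let Γ ∗ Γ′ be the star product: the poset on the disjoint union of ∂Γ = Γ ∖ {1̂_Γ} and Γ′ ∖ {0̂_{Γ′}}, where z ≤ z' iff both lie in ∂Γ with z ≤ z' in Γ, or both lie in Γ′ ∖ {0̂_{Γ′}} with z ≤ z' in Γ′, or z ∈ ∂Γ and z' ∈ Γ′ ∖ {0̂_{Γ′}}. Then: (1) Γ ∗ Γ′ is lower Eulerian with rank function equal to ρ_Γ on ∂Γ and equal to ρ_{Γ′} + rank(Γ) − 1 on Γ′ ∖ {0̂_{Γ′}}; (2) if q′ is a join-admissible element of Γ′ with q′ ≠ 0̂_{Γ′}, then q′, viewed as an element of Γ ∗ Γ′, is join-admissible. -/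
namespace SFSPaper

variable {α β : Type*}

/-- `ρ` is a rank function: it increases by exactly one along covering relations. -/
def IsRankFunction [Preorder α] (ρ : α → ℤ) : Prop :=
  ∀ ⦃z z' : α⦄, z ⋖ z' → ρ z' = ρ z + 1

/-- `σ` is rank-increasing with respect to the rank functions `ρX` and `ρY`. -/
def RankIncreasing [Preorder α] [Preorder β] (ρX : α → ℤ) (ρY : β → ℤ) (σ : α → β) : Prop :=
  ∀ x : α, ρX x ≤ ρY (σ x)

/-- `σ` is strongly surjective. -/
def StronglySurjective [Preorder α] [Preorder β] (ρX : α → ℤ) (ρY : β → ℤ) (σ : α → β) : Prop :=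
  Function.Surjective σ ∧
    ∀ (x : α) (y : β), σ x ≤ y → ∃ x' : α, x ≤ x' ∧ ρX x' = ρY y ∧ σ x' = y

/-- The alternating sum `∑_{z ≤ w ≤ z'} (-1)^(ρ w)`. -/
noncomputable def intervalEulerSum [Preorder α] (ρ : α → ℤ) (z z' : α) : ℚ :=
  ∑ᶠ (w : α) (_ : z ≤ w ∧ w ≤ z'), (-1 : ℚ) ^ ρ w

/-- A poset is lower Eulerian with respect to `ρ` if `ρ` is a rank function, there is a
unique minimal (i.e. least) element, and every nontrivial interval has as many elements of even
rank as of odd rank. -/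
def LowerEulerian [PartialOrder α] (ρ : α → ℤ) : Prop :=
  IsRankFunction ρ ∧ (∃ b : α, ∀ z : α, b ≤ z) ∧
    ∀ z z' : α, z < z' → intervalEulerSum ρ z z' = 0

/-- Eulerian: lower Eulerian with a unique maximal element. -/
def Eulerian [PartialOrder α] (ρ : α → ℤ) : Prop :=
  LowerEulerian ρ ∧ ∃ t : α, ∀ z : α, z ≤ t

/-- Strong formal subdivision. -/
def StrongFormalSubdivision [PartialOrder α] [PartialOrder β]
    (ρX : α → ℤ) (ρY : β → ℤ) (σ : α → β) : Prop :=
  Monotone σ ∧ RankIncreasing ρX ρY σ ∧ StronglySurjective ρX ρY σ ∧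
    ∀ (x : α) (y : β), σ x ≤ y →
      (∑ᶠ (x' : α) (_ : x ≤ x' ∧ σ x' = y), (-1 : ℚ) ^ (ρY y - ρX x')) = 1

/-- `q` is join-admissible: every `z` has a join with `q`. -/
def JoinAdmissible [Preorder α] (q : α) : Prop :=
  ∀ z : α, ∃ j : α, IsLeast {w : α | z ≤ w ∧ q ≤ w} j

/-- The rank of a poset: the maximal length of a chain `z_0 < z_1 < ⋯ < z_s`. -/
noncomputable def posetRank (α : Type*) [Preorder α] : ℕ :=
  sSup {n : ℕ | ∃ c : Fin (n + 1) → α, StrictMono c}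

/-- A poset is graded if all of its maximal chains have the same length (cardinality). -/
def GradedPoset (α : Type*) [Preorder α] : Prop :=
  ∀ s t : Set α, IsMaxChain (· ≤ ·) s → IsMaxChain (· ≤ ·) t → s.ncard = t.ncard


/-- The order relation of the star product: every element of `A` lies below every element
of `B`. -/
def starLE {A B : Type*} [LE A] [LE B] : A ⊕ B → A ⊕ B → Prop
  | Sum.inl x, Sum.inl x' => x ≤ x'
  | Sum.inl _, Sum.inr _ => True
  | Sum.inr _, Sum.inl _ => False
  | Sum.inr y, Sum.inr y' => y ≤ y'

/-- The star product partial order on `A ⊕ B`. -/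
def starPartialOrder (A B : Type*) [PartialOrder A] [PartialOrder B] :
    PartialOrder (A ⊕ B) where
  le := starLE
  lt a b := starLE a b ∧ ¬ starLE b a
  lt_iff_le_not_ge _ _ := Iff.rfl
  le_refl := by rintro (x | y) <;> simp [starLE]
  le_trans := by
    rintro (x | y) (x' | y') (x'' | y'') h1 h2 <;> simp only [starLE] at * <;>
      exact h1.trans h2
  le_antisymm := by
    rintro (x | y) (x' | y') h1 h2 <;> simp only [starLE] at *
    · exact congrArg Sum.inl (le_antisymm h1 h2)
    · exact congrArg Sum.inr (le_antisymm h1 h2)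


section AuxLemmas

open Classical in
lemma aux_finsum_cond_eq_sum_ite {γ : Type*} [Fintype γ] (P : γ → Prop) (f : γ → ℚ) :
    (∑ᶠ (w : γ) (_ : P w), f w) = ∑ w : γ, if P w then f w else 0 := by
  rw [finsum_eq_sum_of_fintype]
  congr 1
  ext w
  rw [finsum_eq_if]

open Classical in
lemma aux_intervalEulerSum_eq {γ : Type*} [Fintype γ] [Preorder γ] (ρ : γ → ℤ) (z z' : γ) :
    intervalEulerSum ρ z z' = ∑ u : γ, if z ≤ u ∧ u ≤ z' then (-1 : ℚ) ^ ρ u else 0 := by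
  rw [intervalEulerSum, aux_finsum_cond_eq_sum_ite]
  exact Finset.sum_congr rfl fun u _ => by by_cases h : z ≤ u ∧ u ≤ z' <;> simp [h]

open Classical in
lemma aux_sum_subtype_ne_eq {γ : Type*} [Fintype γ] (t : γ) (g : {z : γ // z ≠ t} → ℚ)
    (g' : γ → ℚ) (h : ∀ x : {z : γ // z ≠ t}, g x = g' x.1) :
    ∑ x : {z : γ // z ≠ t}, g x = ∑ u : γ, if u ≠ t then g' u else 0 := by
  rw [Finset.sum_congr rfl fun x _ => h x, ← Finset.sum_filter]
  exact (Finset.sum_subtype _ (by simp) g').symm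

open Classical in
lemma aux_sum_ite_erase {γ : Type*} [Fintype γ] (t : γ) (P : γ → Prop) (f : γ → ℚ)
    (hPt : P t) :
    ∑ u : γ, (if P u then f u else 0)
      = (∑ u : γ, if u ≠ t ∧ P u then f u else 0) + f t := by
  have h : ∀ u : γ, (if P u then f u else 0)
      = (if u ≠ t ∧ P u then f u else 0) + (if u = t then f u else 0) := by
    intro u
    by_cases hu : u = t
    · subst hu; simp [hPt]
    · simp [hu]
  rw [Finset.sum_congr rfl (fun u _ => h u), Finset.sum_add_distrib,
    Finset.sum_ite_eq' Finset.univ t f]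
  simp

lemma aux_rank_add_one_le_of_lt {γ : Type*} [PartialOrder γ] [Finite γ] {ρ : γ → ℤ}
    (hρ : IsRankFunction ρ) {z' : γ} : ∀ {z : γ}, z < z' → ρ z + 1 ≤ ρ z' := by
  have hwf := (Finite.to_wellFoundedGT (α := γ)).wf
  intro z
  induction z using hwf.induction with
  | _ z IH =>
    intro h
    obtain ⟨c, hc, hcz'⟩ := exists_covBy_le_of_lt h
    rcases eq_or_lt_of_le hcz' with rfl | hlt
    · exact (hρ hc).ge
    · have h2 := IH c hc.lt hlt
      have := hρ hc
      omega

lemma aux_rank_mono {γ : Type*} [PartialOrder γ] [Finite γ] {ρ : γ → ℤ}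
    (hρ : IsRankFunction ρ) {z z' : γ} (h : z ≤ z') : ρ z ≤ ρ z' := by
  rcases eq_or_lt_of_le h with rfl | h
  · rfl
  · have := aux_rank_add_one_le_of_lt hρ h; omega

lemma aux_chain_rank {γ : Type*} [PartialOrder γ] [Finite γ] {ρ : γ → ℤ}
    (hρ : IsRankFunction ρ) : ∀ {n : ℕ} {c : Fin (n + 1) → γ}, StrictMono c →
      ρ (c 0) + n ≤ ρ (c (Fin.last n)) := by
  intro n
  induction n with
  | zero => intro c _; simp
  | succ m IH =>
    intro c hc
    have h1 : ρ (c 0) + m ≤ ρ (c (Fin.last m).castSucc) := by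
      have := IH (c := fun i => c i.castSucc) (fun i j hij => hc (by simpa using hij))
      simpa using this
    have h2 : ρ (c (Fin.last m).castSucc) + 1 ≤ ρ (c (Fin.last (m+1))) := by
      refine aux_rank_add_one_le_of_lt hρ (hc ?_)
      simp [Fin.lt_def]
    push_cast
    omega

lemma aux_exists_chain_from {γ : Type*} [PartialOrder γ] [Finite γ] {ρ : γ → ℤ}
    (hρ : IsRankFunction ρ) (t : γ) (ht : ∀ z, z ≤ t) :
    ∀ z : γ, ∃ c : Fin ((ρ t - ρ z).toNat + 1) → γ, StrictMono c ∧ c 0 = z := by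
  have hwf := (Finite.to_wellFoundedGT (α := γ)).wf
  intro z
  induction z using hwf.induction with
  | _ z IH =>
    rcases eq_or_lt_of_le (ht z) with rfl | hlt
    · refine ⟨fun _ => z, ?_, rfl⟩
      intro i j hij
      have hi := i.isLt; have hj := j.isLt
      simp only [sub_self, Int.toNat_zero] at hi hj
      have := Fin.lt_def.mp hij
      exact (by omega : False).elim
    · obtain ⟨w, hw, _⟩ := exists_covBy_le_of_lt hlt
      obtain ⟨c, hc, hc0⟩ := IH w hw.lt
      have hwt : ρ w ≤ ρ t := aux_rank_mono hρ (ht w)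
      have hrw : ρ w = ρ z + 1 := hρ hw
      have hn : (ρ t - ρ z).toNat = (ρ t - ρ w).toNat + 1 := by omega
      refine ⟨fun i => if h : (i : ℕ) = 0 then z else c ⟨(i : ℕ) - 1, by omega⟩, ?_, by simp⟩
      intro i j hij
      rcases Nat.eq_zero_or_pos (j : ℕ) with hj | hj
      · exact absurd (Fin.lt_def.mp hij) (by omega)
      rcases Nat.eq_zero_or_pos (i : ℕ) with hi | hi
      · simp only [hi, hj.ne', dif_pos, dif_neg, not_false_iff]
        rcases Nat.eq_zero_or_pos ((j : ℕ) - 1) with h0 | h0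
        · have he : (⟨(j:ℕ)-1, by omega⟩ : Fin ((ρ t - ρ w).toNat+1)) = 0 := by
            ext; simpa using h0
          rw [he, hc0]; exact hw.lt
        · calc z < w := hw.lt
            _ = c 0 := hc0.symm
            _ < c ⟨(j:ℕ)-1, by omega⟩ := hc (by simp [Fin.lt_def]; omega)
      · simp only [hi.ne', hj.ne', dif_neg, not_false_iff]
        exact hc (by simp [Fin.lt_def]; have := Fin.lt_def.mp hij; omega)

lemma aux_posetRank_eq {γ : Type*} [PartialOrder γ] [Finite γ] {ρ : γ → ℤ}
    (hρ : IsRankFunction ρ) (b : γ) (hb : ∀ z, b ≤ z) (t : γ) (ht : ∀ z, z ≤ t)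
    (hρb : ρ b = 0) : (posetRank γ : ℤ) = ρ t := by
  have htnn : 0 ≤ ρ t := hρb ▸ aux_rank_mono hρ (hb t)
  have hbdd : ∀ n ∈ {n : ℕ | ∃ c : Fin (n + 1) → γ, StrictMono c}, n ≤ (ρ t).toNat := by
    rintro n ⟨c, hc⟩
    have h1 := aux_chain_rank hρ hc
    have h2 : ρ b ≤ ρ (c 0) := aux_rank_mono hρ (hb _)
    have h3 : ρ (c (Fin.last n)) ≤ ρ t := aux_rank_mono hρ (ht _)
    omega
  have hmem : (ρ t).toNat ∈ {n : ℕ | ∃ c : Fin (n + 1) → γ, StrictMono c} := by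
    obtain ⟨c, hc, hc0⟩ := aux_exists_chain_from hρ t ht b
    exact ⟨fun i => c (Fin.cast (by rw [hρb, sub_zero]) i),
      fun i j h => hc (by rw [Fin.lt_def] at h ⊢; simpa using h)⟩
  have hle : posetRank γ ≤ (ρ t).toNat := csSup_le ⟨_, hmem⟩ hbdd
  have hge : (ρ t).toNat ≤ posetRank γ := le_csSup ⟨(ρ t).toNat, hbdd⟩ hmem
  have : posetRank γ = (ρ t).toNat := le_antisymm hle hge
  omega

open Classical in
lemma aux_star_intervalEulerSum {A B : Type*} [PartialOrder A] [PartialOrder B]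
    [Fintype A] [Fintype B] (ρA : A → ℤ) (ρB : B → ℤ) (z z' : A ⊕ B) :
    @intervalEulerSum (A ⊕ B) (starPartialOrder A B).toPreorder (Sum.elim ρA ρB) z z'
      = (∑ a : A, if starLE z (Sum.inl a) ∧ starLE (Sum.inl a) z'
            then (-1 : ℚ) ^ ρA a else 0)
        + (∑ w : B, if starLE z (Sum.inr w) ∧ starLE (Sum.inr w) z'
            then (-1 : ℚ) ^ ρB w else 0) := by
  rw [@aux_intervalEulerSum_eq _ _ (starPartialOrder A B).toPreorder, Fintype.sum_sum_type]
  congr 1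

end AuxLemmas

/-- star products. Let `Γ` be a finite Eulerian poset of positive rank
with natural rank function `ρ` (so `ρ 0̂_Γ = 0`), and `Γ'` a finite lower Eulerian poset
with natural rank function `ρ'`. Then the star product
`Γ ∗ Γ' = ∂Γ ⊔ (Γ' ∖ {0̂_{Γ'}})` is lower Eulerian with rank function `ρ` on `∂Γ` and
`ρ' + rank(Γ) - 1` on `Γ' ∖ {0̂_{Γ'}}`; and any join-admissible `q' ≠ 0̂_{Γ'}` of `Γ'`
remains join-admissible in `Γ ∗ Γ'`. -/
theorem star_lowerEulerian_and_joinAdmissible {Γ Γ' : Type*}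
    [PartialOrder Γ] [PartialOrder Γ'] [Finite Γ] [Finite Γ']
    (ρ : Γ → ℤ) (ρ' : Γ' → ℤ)
    (b : Γ) (hb : ∀ z : Γ, b ≤ z) (t : Γ) (ht : ∀ z : Γ, z ≤ t)
    (hΓ : Eulerian ρ) (hrk : 0 < posetRank Γ) (hρb : ρ b = 0)
    (b' : Γ') (hb' : ∀ z : Γ', b' ≤ z)
    (hΓ' : LowerEulerian ρ') (hρ'b : ρ' b' = 0)
    (q' : Γ') (hq' : q' ≠ b')
    (jn' : Γ' → Γ') (hjn' : ∀ z : Γ', IsLeast {w : Γ' | z ≤ w ∧ q' ≤ w} (jn' z)) :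
    @LowerEulerian ({z : Γ // z ≠ t} ⊕ {z : Γ' // z ≠ b'})
      (starPartialOrder {z : Γ // z ≠ t} {z : Γ' // z ≠ b'})
      (Sum.elim (fun x => ρ x.1) (fun y => ρ' y.1 + (posetRank Γ : ℤ) - 1)) ∧
    @JoinAdmissible ({z : Γ // z ≠ t} ⊕ {z : Γ' // z ≠ b'})
      (starPartialOrder {z : Γ // z ≠ t} {z : Γ' // z ≠ b'}).toPreorder
      (Sum.inr ⟨q', hq'⟩) := by
  classical
  letI : Fintype Γ := Fintype.ofFinite Γ
  letI : Fintype Γ' := Fintype.ofFinite Γ'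
  obtain ⟨⟨hρrk, -, hEuΓ⟩, -⟩ := hΓ
  obtain ⟨hρ'rk, -, hEuΓ'⟩ := hΓ'
  have hr : ((posetRank Γ : ℤ)) = ρ t := aux_posetRank_eq hρrk b hb t ht hρb
  have hrpos : (1 : ℤ) ≤ (posetRank Γ : ℤ) := by exact_mod_cast hrk
  have hne : (-1 : ℚ) ≠ 0 := by norm_num
  constructor
  · refine ⟨?_, ?_, ?_⟩
    · -- rank function
      rintro (x | y) (x' | y') hcov
      · have hxx : x.1 ⋖ x'.1 := by
          refine ⟨lt_iff_le_not_ge.mpr ⟨hcov.1.1, fun h => hcov.1.2 h⟩, ?_⟩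
          intro u (hu1 : x.1 < u) (hu2 : u < x'.1)
          have hut : u ≠ t := fun he =>
            absurd ((he ▸ hu2).trans_le (ht x'.1)) (lt_irrefl t)
          exact hcov.2 (c := Sum.inl ⟨u, hut⟩) ⟨hu1.le, fun h => hu1.not_ge h⟩
            ⟨hu2.le, fun h => hu2.not_ge h⟩
        simpa using hρrk hxx
      · have hxt : x.1 ⋖ t := by
          refine ⟨(ht x.1).lt_of_ne x.2, ?_⟩
          intro u (hu1 : x.1 < u) (hu2 : u < t)
          exact hcov.2 (c := Sum.inl ⟨u, hu2.ne⟩) ⟨hu1.le, fun h => hu1.not_ge h⟩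
            ⟨trivial, fun h => h⟩
        have hby : b' ⋖ y'.1 := by
          refine ⟨(hb' y'.1).lt_of_ne (Ne.symm y'.2), ?_⟩
          intro v (hv1 : b' < v) (hv2 : v < y'.1)
          exact hcov.2 (c := Sum.inr ⟨v, hv1.ne'⟩) ⟨trivial, fun h => h⟩
            ⟨hv2.le, fun h => hv2.not_ge h⟩
        have e1 := hρrk hxt
        have e2 := hρ'rk hby
        simp only [Sum.elim_inl, Sum.elim_inr]
        omega
      · exact absurd hcov.1.1 (fun h => h)
      · have hyy : y.1 ⋖ y'.1 := by
          refine ⟨lt_iff_le_not_ge.mpr ⟨hcov.1.1, fun h => hcov.1.2 h⟩, ?_⟩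
          intro v (hv1 : y.1 < v) (hv2 : v < y'.1)
          exact hcov.2 (c := Sum.inr ⟨v, ((hb' y.1).trans_lt hv1).ne'⟩)
            ⟨hv1.le, fun h => hv1.not_ge h⟩ ⟨hv2.le, fun h => hv2.not_ge h⟩
        have := hρ'rk hyy
        simp only [Sum.elim_inr]
        omega
    · -- least element
      have hbt : b ≠ t := by intro h; rw [h] at hρb; omega
      exact ⟨Sum.inl ⟨b, hbt⟩, by rintro (x | y); exacts [hb x.1, trivial]⟩
    · -- Euler sums
      rintro (x | y) (x' | y') hlt
      · -- inl, inl
        have hxx' : x.1 < x'.1 := lt_iff_le_not_ge.mpr ⟨hlt.1, fun h => hlt.2 h⟩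
        rw [aux_star_intervalEulerSum]
        have hB : (∑ w : {z : Γ' // z ≠ b'},
            if starLE (Sum.inl x) (Sum.inr w) ∧ starLE (Sum.inr w) (Sum.inl x')
            then (-1 : ℚ) ^ (ρ' w.1 + (posetRank Γ : ℤ) - 1) else 0) = 0 :=
          Finset.sum_eq_zero fun w _ => if_neg (fun h => h.2)
        rw [hB, add_zero,
          aux_sum_subtype_ne_eq t
            (fun a => if starLE (Sum.inl x : {z : Γ // z ≠ t} ⊕ {z : Γ' // z ≠ b'})
                (Sum.inl a) ∧ starLE (Sum.inl a) (Sum.inl x')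
              then (-1 : ℚ) ^ ρ a.1 else 0)
            (fun u => if x.1 ≤ u ∧ u ≤ x'.1 then (-1 : ℚ) ^ ρ u else 0)
            (fun a => if_congr Iff.rfl rfl rfl)]
        have h0 := hEuΓ x.1 x'.1 hxx'
        rw [aux_intervalEulerSum_eq] at h0
        refine (Finset.sum_congr rfl fun u _ => ?_).trans h0
        by_cases hu : u = t
        · have h1 : ¬(u ≠ t) := by simp [hu]
          have h2 : ¬(x.1 ≤ u ∧ u ≤ x'.1) := fun hh =>
            x'.2 (le_antisymm (ht x'.1) (hu ▸ hh.2))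
          rw [if_neg h1, if_neg h2]
        · rw [if_pos hu]
      · -- inl, inr
        rw [aux_star_intervalEulerSum]
        have hA : (∑ a : {z : Γ // z ≠ t},
            if starLE (Sum.inl x : {z : Γ // z ≠ t} ⊕ {z : Γ' // z ≠ b'})
                (Sum.inl a) ∧ starLE (Sum.inl a) (Sum.inr y')
            then (-1 : ℚ) ^ ρ a.1 else 0)
            = - (-1 : ℚ) ^ ρ t := by
          rw [aux_sum_subtype_ne_eq t
            (fun a => if starLE (Sum.inl x : {z : Γ // z ≠ t} ⊕ {z : Γ' // z ≠ b'})
                (Sum.inl a) ∧ starLE (Sum.inl a) (Sum.inr y')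
              then (-1 : ℚ) ^ ρ a.1 else 0)
            (fun u => if x.1 ≤ u then (-1 : ℚ) ^ ρ u else 0)
            (fun a => if_congr ⟨fun h => h.1, fun h => ⟨h, trivial⟩⟩ rfl rfl)]
          have hsplit := aux_sum_ite_erase t (fun u => x.1 ≤ u)
            (fun u => (-1 : ℚ) ^ ρ u) (ht x.1)
          have hfull : (∑ u : Γ, if x.1 ≤ u then (-1 : ℚ) ^ ρ u else 0) = 0 := by
            have h0 := hEuΓ x.1 t ((ht x.1).lt_of_ne x.2)
            rw [aux_intervalEulerSum_eq] at h0
            refine (Finset.sum_congr rfl fun u _ => ?_).trans h0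
            exact if_congr ⟨fun h => ⟨h, ht u⟩, fun h => h.1⟩ rfl rfl
          have hkey : (∑ u : Γ, if u ≠ t ∧ x.1 ≤ u then (-1 : ℚ) ^ ρ u else 0)
              = - (-1 : ℚ) ^ ρ t := by
            rw [hfull] at hsplit
            linarith
          refine (Finset.sum_congr rfl fun u _ => ?_).trans hkey
          by_cases hu : u = t
          · have h1 : ¬(u ≠ t) := by simp [hu]
            rw [if_neg h1, if_neg (show ¬(u ≠ t ∧ x.1 ≤ u) from fun hh => hh.1 hu)]
          · rw [if_pos hu]
            exact if_congr ⟨fun h => ⟨hu, h⟩, fun h => h.2⟩ rfl rfl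
        have hB : (∑ w : {z : Γ' // z ≠ b'},
            if starLE (Sum.inl x) (Sum.inr w) ∧
                starLE (Sum.inr w : {z : Γ // z ≠ t} ⊕ {z : Γ' // z ≠ b'}) (Sum.inr y')
            then (-1 : ℚ) ^ (ρ' w.1 + (posetRank Γ : ℤ) - 1) else 0)
            = - (-1 : ℚ) ^ ((posetRank Γ : ℤ) - 1) := by
          rw [aux_sum_subtype_ne_eq b'
            (fun w => if starLE (Sum.inl x : {z : Γ // z ≠ t} ⊕ {z : Γ' // z ≠ b'})
                (Sum.inr w) ∧
                starLE (Sum.inr w : {z : Γ // z ≠ t} ⊕ {z : Γ' // z ≠ b'}) (Sum.inr y')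
              then (-1 : ℚ) ^ (ρ' w.1 + (posetRank Γ : ℤ) - 1) else 0)
            (fun v => if v ≤ y'.1 then (-1 : ℚ) ^ (ρ' v + (posetRank Γ : ℤ) - 1) else 0)
            (fun w => if_congr ⟨fun h => h.2, fun h => ⟨trivial, h⟩⟩ rfl rfl)]
          have hsplit := aux_sum_ite_erase b' (fun v => v ≤ y'.1)
            (fun v => (-1 : ℚ) ^ (ρ' v + (posetRank Γ : ℤ) - 1)) (hb' y'.1)
          have h0 := hEuΓ' b' y'.1 ((hb' y'.1).lt_of_ne (Ne.symm y'.2))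
          rw [aux_intervalEulerSum_eq] at h0
          have hfin : (∑ v : Γ', (if b' ≤ v ∧ v ≤ y'.1 then (-1 : ℚ) ^ ρ' v else 0)
              * (-1 : ℚ) ^ ((posetRank Γ : ℤ) - 1)) = 0 := by
            rw [← Finset.sum_mul, h0, zero_mul]
          have hfull : (∑ v : Γ', if v ≤ y'.1
              then (-1 : ℚ) ^ (ρ' v + (posetRank Γ : ℤ) - 1) else 0) = 0 := by
            refine (Finset.sum_congr rfl fun v _ => ?_).trans hfin
            by_cases hv : v ≤ y'.1
            · rw [if_pos hv, if_pos ⟨hb' v, hv⟩, ← zpow_add₀ hne]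
              congr 1
              omega
            · rw [if_neg hv,
                if_neg (show ¬(b' ≤ v ∧ v ≤ y'.1) from fun hh => hv hh.2), zero_mul]
          have hkey : (∑ v : Γ', if v ≠ b' ∧ v ≤ y'.1
              then (-1 : ℚ) ^ (ρ' v + (posetRank Γ : ℤ) - 1) else 0)
              = - (-1 : ℚ) ^ (ρ' b' + (posetRank Γ : ℤ) - 1) := by
            rw [hfull] at hsplit
            linarith
          have hb0 : ρ' b' + (posetRank Γ : ℤ) - 1 = (posetRank Γ : ℤ) - 1 := by
            rw [hρ'b]; omega
          rw [hb0] at hkey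
          refine (Finset.sum_congr rfl fun v _ => ?_).trans hkey
          by_cases hv : v = b'
          · have h1 : ¬(v ≠ b') := by simp [hv]
            rw [if_neg h1,
              if_neg (show ¬(v ≠ b' ∧ v ≤ y'.1) from fun hh => hh.1 hv)]
          · rw [if_pos hv]
            exact if_congr ⟨fun h => ⟨hv, h⟩, fun h => h.2⟩ rfl rfl
        rw [hA, hB]
        have hpow : (-1 : ℚ) ^ ρ t = - (-1 : ℚ) ^ ((posetRank Γ : ℤ) - 1) := by
          rw [← hr, show (posetRank Γ : ℤ) = ((posetRank Γ : ℤ) - 1) + 1 by omega,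
            zpow_add_one₀ hne]
          ring_nf
        rw [hpow]
        ring_nf
      · -- inr, inl
        exact absurd hlt.1 (fun h => h)
      · -- inr, inr
        have hyy' : y.1 < y'.1 := lt_iff_le_not_ge.mpr ⟨hlt.1, fun h => hlt.2 h⟩
        rw [aux_star_intervalEulerSum]
        have hA : (∑ a : {z : Γ // z ≠ t},
            if starLE (Sum.inr y) (Sum.inl a) ∧ starLE (Sum.inl a) (Sum.inr y')
            then (-1 : ℚ) ^ ρ a.1 else 0) = 0 :=
          Finset.sum_eq_zero fun a _ => if_neg (fun h => h.1)
        rw [hA, zero_add,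
          aux_sum_subtype_ne_eq b'
            (fun w => if starLE (Sum.inr y : {z : Γ // z ≠ t} ⊕ {z : Γ' // z ≠ b'})
                (Sum.inr w) ∧
                starLE (Sum.inr w : {z : Γ // z ≠ t} ⊕ {z : Γ' // z ≠ b'}) (Sum.inr y')
              then (-1 : ℚ) ^ (ρ' w.1 + (posetRank Γ : ℤ) - 1) else 0)
            (fun v => if y.1 ≤ v ∧ v ≤ y'.1
              then (-1 : ℚ) ^ (ρ' v + (posetRank Γ : ℤ) - 1) else 0)
            (fun w => if_congr Iff.rfl rfl rfl)]
        have h0 := hEuΓ' y.1 y'.1 hyy'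
        rw [aux_intervalEulerSum_eq] at h0
        have hfin : (∑ v : Γ', (if y.1 ≤ v ∧ v ≤ y'.1 then (-1 : ℚ) ^ ρ' v else 0)
            * (-1 : ℚ) ^ ((posetRank Γ : ℤ) - 1)) = 0 := by
          rw [← Finset.sum_mul, h0, zero_mul]
        refine (Finset.sum_congr rfl fun v _ => ?_).trans hfin
        by_cases hv : y.1 ≤ v ∧ v ≤ y'.1
        · have hvb : v ≠ b' := fun hvb' =>
            y.2 (le_antisymm (hvb' ▸ hv.1) (hb' y.1))
          rw [if_pos hvb, if_pos hv, if_pos hv, ← zpow_add₀ hne]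
          congr 1
          omega
        · rw [if_neg hv, if_neg hv, zero_mul]
          simp
  · -- join admissibility
    rintro (x | y)
    · refine ⟨Sum.inr ⟨q', hq'⟩, ⟨trivial, le_refl (⟨q', hq'⟩ : {z : Γ' // z ≠ b'})⟩, ?_⟩
      rintro (u | v) ⟨h1, h2⟩
      · exact absurd h2 (fun h => h)
      · exact h2
    · have hj := hjn' y.1
      have hjb : jn' y.1 ≠ b' := fun h => hq' (le_antisymm (h ▸ hj.1.2) (hb' q'))
      refine ⟨Sum.inr ⟨jn' y.1, hjb⟩, ⟨hj.1.1, hj.1.2⟩, ?_⟩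
      rintro (u | v) ⟨h1, h2⟩
      · exact absurd h1 (fun h => h)
      · exact hj.2 ⟨h1, h2⟩

end SFSPaper
end

section
/- Let σ : X → Y and σ′ : X′ → Y′ be strong formal subdivisions between finite lower Eulerian posets, with rank functions ρ_X, ρ_Y, ρ_{X′}, ρ_{Y′}. Then the componentwise-ordered products X × X′ and Y × Y′, equipped with the rank functions (x, x') ↦ ρ_X(x) + ρ_{X′}(x') and (y, y') ↦ ρ_Y(y) + ρ_{Y′}(y'), are lower Eulerian, and the map σ × σ′ : X × X′ → Y × Y′, (x, x') ↦ (σ(x), σ′(x')), is a strong formal subdivision. -/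
namespace SFSPaper

variable {α β : Type*}

open Classical in
lemma finsum_cond_eq_filter_sum {α : Type*} [Fintype α] (P : α → Prop) (f : α → ℚ) :
    (∑ᶠ (w : α) (_ : P w), f w) = ∑ w ∈ Finset.univ.filter P, f w := by
  apply finsum_cond_eq_sum_of_cond_iff
  intro i _
  simp

open Classical in
lemma prod_sum_factor {α β : Type*} [Fintype α] [Fintype β]
    (P : α → Prop) (Q : β → Prop) (f : α → ℚ) (g : β → ℚ) :
    (∑ᶠ (p : α × β) (_ : P p.1 ∧ Q p.2), f p.1 * g p.2)
      = (∑ᶠ (a : α) (_ : P a), f a) * (∑ᶠ (b : β) (_ : Q b), g b) := by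
  rw [finsum_cond_eq_filter_sum, finsum_cond_eq_filter_sum, finsum_cond_eq_filter_sum]
  rw [Finset.sum_filter, Finset.sum_filter, Finset.sum_filter, Fintype.sum_prod_type, Finset.sum_mul_sum]
  refine Finset.sum_congr rfl fun a _ => Finset.sum_congr rfl fun b _ => ?_
  by_cases hP : P a <;> by_cases hQ : Q b <;> simp [hP, hQ]

lemma prod_covBy {α β : Type*} [PartialOrder α] [PartialOrder β] {a c : α} {b d : β}
    (h : (a, b) ⋖ (c, d)) : (a ⋖ c ∧ b = d) ∨ (a = c ∧ b ⋖ d) := by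
  have hac : a ≤ c := h.lt.le.1
  have hbd : b ≤ d := h.lt.le.2
  rcases eq_or_lt_of_le hac with hEq | hlt
  · right
    refine ⟨hEq, ?_⟩
    have hbd' : b < d := by
      rcases eq_or_lt_of_le hbd with hb | hb
      · exact absurd (Prod.ext hEq hb) h.lt.ne
      · exact hb
    refine ⟨hbd', fun e he1 he2 => ?_⟩
    exact h.2 (show (a, b) < (a, e) from Prod.mk_lt_mk_iff_right.2 he1)
      (by subst hEq; exact Prod.mk_lt_mk_iff_right.2 he2)
  · left
    have hbd' : b = d := by
      by_contra hne
      have hbd2 : b < d := lt_of_le_of_ne hbd hne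
      exact h.2 (show (a, b) < (c, b) from Prod.mk_lt_mk_iff_left.2 hlt)
        (Prod.mk_lt_mk_iff_right.2 hbd2)
    refine ⟨⟨hlt, fun e he1 he2 => ?_⟩, hbd'⟩
    exact h.2 (show (a, b) < (e, b) from Prod.mk_lt_mk_iff_left.2 he1)
      (by subst hbd'; exact Prod.mk_lt_mk_iff_left.2 he2)

lemma neg_one_zpow_add (m n : ℤ) : (-1 : ℚ) ^ (m + n) = (-1 : ℚ) ^ m * (-1 : ℚ) ^ n :=
  zpow_add₀ (by norm_num) m n

lemma prod_lowerEulerian {α β : Type*} [PartialOrder α] [PartialOrder β]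
    [Finite α] [Finite β] (ρ1 : α → ℤ) (ρ2 : β → ℤ)
    (h1 : LowerEulerian ρ1) (h2 : LowerEulerian ρ2) :
    LowerEulerian (fun p : α × β => ρ1 p.1 + ρ2 p.2) := by
  have := Fintype.ofFinite α
  have := Fintype.ofFinite β
  obtain ⟨hr1, ⟨b1, hb1⟩, he1⟩ := h1
  obtain ⟨hr2, ⟨b2, hb2⟩, he2⟩ := h2
  refine ⟨?_, ⟨(b1, b2), fun z => ⟨hb1 z.1, hb2 z.2⟩⟩, ?_⟩
  · rintro ⟨a, b⟩ ⟨c, d⟩ h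
    rcases prod_covBy h with ⟨hc, he⟩ | ⟨he, hc⟩
    · simp only
      rw [hr1 hc, he]; ring
    · simp only
      rw [hr2 hc, he]; ring
  · rintro ⟨z1, z2⟩ ⟨w1, w2⟩ hlt
    have key : intervalEulerSum (fun p : α × β => ρ1 p.1 + ρ2 p.2) (z1, z2) (w1, w2)
        = intervalEulerSum ρ1 z1 w1 * intervalEulerSum ρ2 z2 w2 := by
      unfold intervalEulerSum
      rw [← prod_sum_factor (fun a => z1 ≤ a ∧ a ≤ w1) (fun b => z2 ≤ b ∧ b ≤ w2)
        (fun a => (-1 : ℚ) ^ ρ1 a) (fun b => (-1 : ℚ) ^ ρ2 b)]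
      apply finsum_congr; intro p
      have : ((z1, z2) ≤ p ∧ p ≤ (w1, w2)) ↔
          ((z1 ≤ p.1 ∧ p.1 ≤ w1) ∧ (z2 ≤ p.2 ∧ p.2 ≤ w2)) := by
        constructor
        · rintro ⟨⟨a, b⟩, ⟨c, d⟩⟩; exact ⟨⟨a, c⟩, ⟨b, d⟩⟩
        · rintro ⟨⟨a, c⟩, ⟨b, d⟩⟩; exact ⟨⟨a, b⟩, ⟨c, d⟩⟩
      rw [this]
      congr 1
      exact funext fun _ => neg_one_zpow_add _ _
    rw [key]
    have hz1 : z1 ≤ w1 := hlt.le.1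
    have hz2 : z2 ≤ w2 := hlt.le.2
    rcases eq_or_lt_of_le hz1 with hEq | hlt1
    · have hlt2 : z2 < w2 := by
        rcases eq_or_lt_of_le hz2 with hb | hb
        · exact absurd (Prod.ext hEq hb) hlt.ne
        · exact hb
      rw [he2 _ _ hlt2, mul_zero]
    · rw [he1 _ _ hlt1, zero_mul]

/-- products of subdivisions. If `σ : X → Y` and `σ' : X' → Y'` are
strong formal subdivisions between finite lower Eulerian posets, then `X × X'` and
`Y × Y'` with the sum rank functions are lower Eulerian and
`σ × σ' : X × X' → Y × Y'` is a strong formal subdivision. -/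
theorem prod_strongFormalSubdivision {X Y X' Y' : Type*}
    [PartialOrder X] [PartialOrder Y] [PartialOrder X'] [PartialOrder Y']
    [Finite X] [Finite Y] [Finite X'] [Finite Y']
    (ρX : X → ℤ) (ρY : Y → ℤ) (ρX' : X' → ℤ) (ρY' : Y' → ℤ)
    (hX : LowerEulerian ρX) (hY : LowerEulerian ρY)
    (hX' : LowerEulerian ρX') (hY' : LowerEulerian ρY')
    (σ : X → Y) (hσ : StrongFormalSubdivision ρX ρY σ)
    (σ' : X' → Y') (hσ' : StrongFormalSubdivision ρX' ρY' σ') :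
    LowerEulerian (fun p : X × X' => ρX p.1 + ρX' p.2) ∧
    LowerEulerian (fun p : Y × Y' => ρY p.1 + ρY' p.2) ∧
    StrongFormalSubdivision (fun p : X × X' => ρX p.1 + ρX' p.2)
      (fun p : Y × Y' => ρY p.1 + ρY' p.2) (Prod.map σ σ') := by
  have := Fintype.ofFinite X
  have := Fintype.ofFinite X'
  obtain ⟨hm, hri, ⟨hsurj, hstrong⟩, hsum⟩ := hσ
  obtain ⟨hm', hri', ⟨hsurj', hstrong'⟩, hsum'⟩ := hσ'
  refine ⟨prod_lowerEulerian ρX ρX' hX hX', prod_lowerEulerian ρY ρY' hY hY', ?_, ?_, ⟨?_, ?_⟩, ?_⟩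
  · rintro ⟨a, b⟩ ⟨c, d⟩ ⟨h1, h2⟩
    exact ⟨hm h1, hm' h2⟩
  · rintro ⟨a, b⟩
    exact add_le_add (hri a) (hri' b)
  · rintro ⟨y1, y2⟩
    obtain ⟨x1, hx1⟩ := hsurj y1
    obtain ⟨x2, hx2⟩ := hsurj' y2
    exact ⟨(x1, x2), Prod.ext hx1 hx2⟩
  · rintro ⟨x1, x2⟩ ⟨y1, y2⟩ ⟨h1, h2⟩
    obtain ⟨a1, ha1, hra1, hsa1⟩ := hstrong x1 y1 h1
    obtain ⟨a2, ha2, hra2, hsa2⟩ := hstrong' x2 y2 h2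
    exact ⟨(a1, a2), ⟨ha1, ha2⟩, by simp only; rw [hra1, hra2], Prod.ext hsa1 hsa2⟩
  · rintro ⟨x1, x2⟩ ⟨y1, y2⟩ ⟨h1, h2⟩
    have key : (∑ᶠ (p : X × X') (_ : (x1, x2) ≤ p ∧ Prod.map σ σ' p = (y1, y2)),
        (-1 : ℚ) ^ ((ρY y1 + ρY' y2) - (ρX p.1 + ρX' p.2)))
        = (∑ᶠ (a : X) (_ : x1 ≤ a ∧ σ a = y1), (-1 : ℚ) ^ (ρY y1 - ρX a)) *
          (∑ᶠ (b : X') (_ : x2 ≤ b ∧ σ' b = y2), (-1 : ℚ) ^ (ρY' y2 - ρX' b)) := by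
      rw [← prod_sum_factor (fun a => x1 ≤ a ∧ σ a = y1) (fun b => x2 ≤ b ∧ σ' b = y2)]
      apply finsum_congr; intro p
      have hc : ((x1, x2) ≤ p ∧ Prod.map σ σ' p = (y1, y2)) ↔
          ((x1 ≤ p.1 ∧ σ p.1 = y1) ∧ (x2 ≤ p.2 ∧ σ' p.2 = y2)) := by
        rw [Prod.ext_iff, Prod.le_def]
        simp only [Prod.map_fst, Prod.map_snd]
        tauto
      rw [hc]
      congr 1
      funext _
      rw [show (ρY y1 + ρY' y2) - (ρX p.1 + ρX' p.2)
          = (ρY y1 - ρX p.1) + (ρY' y2 - ρX' p.2) by ring, neg_one_zpow_add]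
    calc (∑ᶠ (p : X × X') (_ : (x1, x2) ≤ p ∧ Prod.map σ σ' p = (y1, y2)),
          (-1 : ℚ) ^ ((fun p : Y × Y' => ρY p.1 + ρY' p.2) (y1, y2)
            - (fun p : X × X' => ρX p.1 + ρX' p.2) p)) = _ := key
      _ = 1 := by rw [hsum x1 y1 h1, hsum' x2 y2 h2, mul_one]


end SFSPaper
end

section
/- Let Γ and Γ′ be finite lower Eulerian posets with rank functions ρ_Γ and ρ_{Γ′}, let q ∈ Γ and q′ ∈ Γ′ be join-admissible elements with q ≠ 0̂_Γ and q′ ≠ 0̂_{Γ′}, and let φ : Γ → Γ′ be a strong formal subdivision such that φ(q) = q′ and φ(z ∨ q) = φ(z) ∨ q′ for all z ∈ Γ with q ≰ z. Then φ⁻¹({z' ∈ Γ′ : q′ ≤ z'}) = {z ∈ Γ : q ≤ z}. -/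
namespace SFSPaper

variable {α β : Type*}

/-- Let `φ : Γ → Γ'` be a strong formal subdivision between finite
lower Eulerian posets with join-admissible non-minimal elements `q ∈ Γ`, `q' ∈ Γ'`
(with join functions `jn`, `jn'`), such that `φ(q) = q'` and
`φ(z ∨ q) = φ(z) ∨ q'` for all `z` with `q ≰ z`. Then
`φ⁻¹(Γ'_{≥ q'}) = Γ_{≥ q}`. -/
theorem preimage_upperSet_eq {Γ Γ' : Type*} [PartialOrder Γ] [PartialOrder Γ']
    [Finite Γ] [Finite Γ']
    (ρ : Γ → ℤ) (ρ' : Γ' → ℤ) (hΓ : LowerEulerian ρ) (hΓ' : LowerEulerian ρ')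
    (b : Γ) (hb : ∀ z : Γ, b ≤ z) (b' : Γ') (hb' : ∀ z : Γ', b' ≤ z)
    (q : Γ) (hq : q ≠ b) (q' : Γ') (hq' : q' ≠ b')
    (jn : Γ → Γ) (hjn : ∀ z : Γ, IsLeast {w : Γ | z ≤ w ∧ q ≤ w} (jn z))
    (jn' : Γ' → Γ') (hjn' : ∀ z : Γ', IsLeast {w : Γ' | z ≤ w ∧ q' ≤ w} (jn' z))
    (φ : Γ → Γ') (hφ : StrongFormalSubdivision ρ ρ' φ)
    (hφq : φ q = q') (hφjoin : ∀ z : Γ, ¬ q ≤ z → φ (jn z) = jn' (φ z)) :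
    φ ⁻¹' {z' : Γ' | q' ≤ z'} = {z : Γ | q ≤ z} := by
  classical
  have := Fintype.ofFinite Γ
  obtain ⟨hmono, hri, hss, hsum⟩ := hφ
  have key : ∀ z : Γ, q' ≤ φ z → q ≤ z := by
    by_contra h
    push_neg at h
    obtain ⟨z0, hz1, hz2⟩ := h
    obtain ⟨m, hm, hmax0⟩ := (Set.toFinite {z : Γ | q' ≤ φ z ∧ ¬ q ≤ z}).exists_maximalFor
      id _ ⟨z0, hz1, hz2⟩
    have hmax : ∀ x ∈ {z : Γ | q' ≤ φ z ∧ ¬ q ≤ z}, id m ≤ id x → id m = id x :=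
      fun x hx h => le_antisymm h (hmax0 hx h)
    obtain ⟨hm1, hm2⟩ := hm
    set w := jn m with hw
    obtain ⟨⟨hmw, hqw⟩, hleast⟩ := hjn m
    -- φ w = φ m
    have hjnφm : jn' (φ m) = φ m := by
      obtain ⟨_, hl'⟩ := hjn' (φ m)
      exact le_antisymm (hl' ⟨le_rfl, hm1⟩) (hjn' (φ m)).1.1
    have hφw : φ w = φ m := by
      rw [hφjoin m hm2, hjnφm]
    -- the two sums
    have S1 := hsum m (φ m) le_rfl
    have S2 := hsum w (φ m) hφw.le
    -- convert to finset sums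
    set f : Γ → ℚ := fun x' => (-1 : ℚ) ^ (ρ' (φ m) - ρ x') with hf
    have hfne : ∀ x : Γ, f x ≠ 0 := fun x => zpow_ne_zero _ (by norm_num)
    set s1 : Finset Γ := Finset.univ.filter (fun x' => m ≤ x' ∧ φ x' = φ m) with hs1
    set s2 : Finset Γ := Finset.univ.filter (fun x' => w ≤ x' ∧ φ x' = φ m) with hs2
    have e1 : (∑ᶠ (x' : Γ) (_ : m ≤ x' ∧ φ x' = φ m), f x') = ∑ x' ∈ s1, f x' :=
      finsum_cond_eq_sum_of_cond_iff f (fun {x} _ => by simp [hs1])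
    have e2 : (∑ᶠ (x' : Γ) (_ : w ≤ x' ∧ φ x' = φ m), f x') = ∑ x' ∈ s2, f x' :=
      finsum_cond_eq_sum_of_cond_iff f (fun {x} _ => by simp [hs2])
    have hmns2 : m ∉ s2 := by
      simp only [hs2, Finset.mem_filter, Finset.mem_univ, true_and]
      rintro ⟨hwm, -⟩
      exact hm2 (hqw.trans hwm)
    have hsplit : s1 = insert m s2 := by
      ext x
      simp only [hs1, hs2, Finset.mem_insert, Finset.mem_filter, Finset.mem_univ, true_and]
      constructor
      · rintro ⟨hmx, hφx⟩
        by_cases hxm : x = m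
        · exact Or.inl hxm
        · right
          have hqx : q ≤ x := by
            by_contra hqx
            exact hxm (hmax x ⟨hφx ▸ hm1, hqx⟩ hmx).symm
          exact ⟨hleast ⟨hmx, hqx⟩, hφx⟩
      · rintro (rfl | ⟨hwx, hφx⟩)
        · exact ⟨le_rfl, rfl⟩
        · exact ⟨hmw.trans hwx, hφx⟩
    rw [e1, hsplit, Finset.sum_insert hmns2] at S1
    rw [e2] at S2
    rw [S2] at S1
    have : f m = 0 := by linear_combination S1
    exact hfne m this
  ext z
  simp only [Set.mem_preimage, Set.mem_setOf_eq]
  exact ⟨key z, fun hz => hφq ▸ hmono hz⟩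

end SFSPaper
end

section
/- Let Γ be a finite Eulerian poset of positive rank with natural rank function ρ_Γ, and let q be a join-admissible element of Γ with q ∉ {0̂_Γ, 1̂_Γ}. Set X = Γ ∖ {z ∈ Γ : q ≤ z} and Y = {z ∈ Γ : q ≤ z} = [q, 1̂_Γ], and for y ∈ Y write X_{≤y} = {x ∈ X : x ∨ q ≤ y} and X_{<y} = {x ∈ X : x ∨ q < y}; write ∂X = X_{<1̂_Γ}. Then, in the free associative ℚ-algebra ℚ⟨a,b⟩ on two noncommuting generators a and b, the following identity holds: Ψ(Γ) = ℓΨ(X) + (1/2)·[ Ψ(overline{∂X})·(a+b) + Ψ([0̂_Γ, q])·(a+b)·Ψ([q, 1̂_Γ]) + ∑_{y ∈ Γ, q < y < 1̂_Γ} ( ℓΨ(X_{≤y})·(a+b) + Ψ(overline{X_{<y}})·(ab+ba) )·Ψ([y, 1̂_Γ]) ], where each interval is regarded as an Eulerian poset with its natural rank function. (This identity is the image of the cd-index identity Φ(Γ) = ℓΦ(X) + ½[Φ(overline{∂X})c + Φ([0̂_Γ,q])cΦ(Y) + ∑_{q<y<1̂_Γ}(ℓΦ(X_{≤y})c + Φ(overline{X_{<y}})d)Φ([y,1̂_Γ])]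 under the injective substitution c ↦ a+b, d ↦ ab+ba.) -/
namespace SFSPaper

variable {α β : Type*}

/-- The free `ℚ`-algebra `ℚ⟨a,b⟩` on two noncommuting generators. -/
noncomputable abbrev ABAlg : Type := FreeAlgebra ℚ (Fin 2)

/-- The generator `a`. -/
noncomputable def aGen : ABAlg := FreeAlgebra.ι ℚ 0

/-- The generator `b`. -/
noncomputable def bGen : ABAlg := FreeAlgebra.ι ℚ 1

/-- The word `w_S = w_1 ⋯ w_n`, with `w_i = b` if `i ∈ S` and `w_i = a - b` otherwise. -/
noncomputable def wordOf (S : Finset ℕ) (n : ℕ) : ABAlg :=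
  ((List.range n).map fun i => if i + 1 ∈ S then bGen else aGen - bGen).prod

/-- The flag number `f_S`: the number of chains contained in `P` (the set of elements
strictly between the minimal and the maximal element of the poset under consideration,
inside an ambient poset `α`) whose set of `ρ`-ranks is exactly `S`. -/
noncomputable def flagCount {α : Type*} [PartialOrder α] (P : Set α) (ρ : α → ℤ)
    (S : Finset ℕ) : ℕ :=
  Nat.card {C : Finset α // ↑C ⊆ P ∧ IsChain (· ≤ ·) (↑C : Set α) ∧
    C.card = S.card ∧ C.image ρ = S.image (fun i : ℕ => (i : ℤ))}

/-- The ab-polynomial `Ψ = ∑_{S ⊆ {1,…,n}} f_S · w_S` of the poset whose set of elements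
strictly between the minimal and the maximal element is `P`, with (natural) rank function
`ρ` and maximal element of rank `n + 1`. -/
noncomputable def abPsi {α : Type*} [PartialOrder α] (P : Set α) (ρ : α → ℤ) (n : ℕ) :
    ABAlg :=
  ∑ᶠ (S : Finset ℕ) (_ : S ⊆ Finset.Icc 1 n), (flagCount P ρ S : ABAlg) * wordOf S n

/-- The ab-polynomial of the semisuspension `Σ̃B` of a near-Eulerian poset `B` of rank
`n`, where `P = B ∖ {0̂_B}` and `Q = ∂B ∖ {0̂_B}`: chains avoiding the adjoined element
`ẑ` are exactly the chains in `P`, while chains through `ẑ` (which has rank `n`) consist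
of a chain in `Q` together with `ẑ`. -/
noncomputable def abPsiSemi {α : Type*} [PartialOrder α] (P Q : Set α) (ρ : α → ℤ)
    (n : ℕ) : ABAlg :=
  abPsi P ρ n +
    ∑ᶠ (S : Finset ℕ) (_ : S ⊆ Finset.Icc 1 n ∧ n ∈ S),
      (flagCount Q ρ (S.erase n) : ABAlg) * wordOf S n

/-- The local ab-polynomial `ℓΨ(B) = Ψ(Σ̃B) - Ψ(overline{∂B})·(a + b)` of a near-Eulerian
poset `B` of rank `n` with `P = B ∖ {0̂_B}` and `Q = ∂B ∖ {0̂_B}` (so that `Q` is the set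
of elements of `overline{∂B}` strictly between its minimal and its maximal element, and
`overline{∂B}` has rank `n`). -/
noncomputable def localAbPsi {α : Type*} [PartialOrder α] (P Q : Set α) (ρ : α → ℤ)
    (n : ℕ) : ABAlg :=
  abPsiSemi P Q ρ n - abPsi Q ρ (n - 1) * (aGen + bGen)

set_option linter.unusedSectionVars false
section Aux

open Finset

variable {Γ : Type*} [PartialOrder Γ] [Fintype Γ] [DecidableEq Γ]

open Classical in
/-- The finset of (finsets that are) chains contained in `P`. -/
noncomputable def chainsIn (P : Set Γ) : Finset (Finset Γ) :=
  Finset.univ.filter (fun C : Finset Γ => ↑C ⊆ P ∧ IsChain (· ≤ ·) (↑C : Set Γ))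

lemma mem_chainsIn {P : Set Γ} {C : Finset Γ} :
    C ∈ chainsIn P ↔ ↑C ⊆ P ∧ IsChain (· ≤ ·) (↑C : Set Γ) := by
  classical
  simp [chainsIn]

open Classical in
/-- The weight of a chain `C`: word of length `n`, position `i+1` (i.e. rank `k+i+1`)
gets `b` if `C` has an element of that rank, else `a - b`. -/
noncomputable def cw (ρ : Γ → ℤ) (C : Finset Γ) (k : ℤ) (n : ℕ) : ABAlg :=
  ((List.range n).map fun i : ℕ => if ∃ x ∈ C, ρ x = k + (i : ℤ) + 1 then bGen else aGen - bGen).prod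

lemma cw_congr {ρ : Γ → ℤ} {C D : Finset Γ} {k : ℤ} {n : ℕ}
    (h : ∀ i : ℕ, i < n → ((∃ x ∈ C, ρ x = k + i + 1) ↔ (∃ x ∈ D, ρ x = k + i + 1))) :
    cw ρ C k n = cw ρ D k n := by
  classical
  unfold cw
  congr 1
  refine List.map_congr_left fun i hi => ?_
  rw [List.mem_range] at hi
  exact if_congr (h i hi) rfl rfl

lemma cw_split (ρ : Γ → ℤ) (C : Finset Γ) (k : ℤ) (m n : ℕ) (h : m < n) :
    cw ρ C k n = cw ρ C k m *
      ((if ∃ x ∈ C, ρ x = k + m + 1 then bGen else aGen - bGen) *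
        cw ρ C (k + m + 1) (n - m - 1)) := by
  classical
  have hn : n = m + 1 + (n - m - 1) := by omega
  conv_lhs => rw [hn]
  unfold cw
  rw [List.range_add, List.range_succ, List.map_append, List.map_append, List.prod_append,
    List.prod_append, List.map_map]
  simp only [List.map_cons, List.map_nil, List.prod_cons, List.prod_nil, mul_one, mul_assoc]
  congr 2
  refine congrArg _ (List.map_congr_left fun i _ => ?_)
  show (if ∃ x ∈ C, ρ x = k + ((m : ℕ) + 1 + i : ℕ) + 1 then bGen else aGen - bGen) = _
  refine if_congr (exists_congr fun x => and_congr_right fun _ => ?_) rfl rfl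
  constructor <;> intro hh <;> omega


lemma cw_zero (ρ : Γ → ℤ) (C : Finset Γ) (k : ℤ) : cw ρ C k 0 = 1 := rfl

lemma cw_congr' {ρ : Γ → ℤ} {C D : Finset Γ} {k k' : ℤ} {n : ℕ} (hk : k = k')
    (h : ∀ i : ℕ, i < n → ((∃ x ∈ C, ρ x = k + i + 1) ↔ (∃ x ∈ D, ρ x = k + i + 1))) :
    cw ρ C k n = cw ρ D k' n := by subst hk; exact cw_congr h

lemma cw_merge_b (ρ : Γ → ℤ) (C D : Finset Γ) (y : Γ) (m n : ℕ) (hmn : m < n)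
    (hy : ρ y = (m : ℤ) + 1)
    (hC : ∀ x ∈ C, 1 ≤ ρ x ∧ ρ x ≤ (m : ℤ))
    (hD : ∀ x ∈ D, (m : ℤ) + 2 ≤ ρ x ∧ ρ x ≤ (n : ℤ)) :
    cw ρ C 0 m * (bGen * cw ρ D ((m : ℤ) + 1) (n - m - 1))
      = cw ρ (insert y (C ∪ D)) 0 n := by
  classical
  rw [cw_split ρ (insert y (C ∪ D)) 0 m n hmn]
  have h1 : cw ρ (insert y (C ∪ D)) 0 m = cw ρ C 0 m := by
    refine cw_congr fun i hi => ?_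
    constructor
    · rintro ⟨x, hx, hval⟩
      simp only [Finset.mem_insert, Finset.mem_union] at hx
      rcases hx with rfl | hx | hx
      · exfalso; omega
      · exact ⟨x, hx, hval⟩
      · exact absurd hval (by have := hD x hx; omega)
    · rintro ⟨x, hx, hval⟩
      exact ⟨x, by simp [hx], hval⟩
  have h2 : (if ∃ x ∈ insert y (C ∪ D), ρ x = 0 + (m : ℤ) + 1 then bGen else aGen - bGen)
      = bGen := by
    rw [if_pos ⟨y, Finset.mem_insert_self _ _, by omega⟩]
  have h3 : cw ρ (insert y (C ∪ D)) (0 + (m : ℤ) + 1) (n - m - 1)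
      = cw ρ D ((m : ℤ) + 1) (n - m - 1) := by
    refine cw_congr' (by omega) fun i hi => ?_
    constructor
    · rintro ⟨x, hx, hval⟩
      simp only [Finset.mem_insert, Finset.mem_union] at hx
      rcases hx with rfl | hx | hx
      · exfalso; omega
      · exact absurd hval (by have := hC x hx; omega)
      · exact ⟨x, hx, hval⟩
    · rintro ⟨x, hx, hval⟩
      exact ⟨x, by simp [hx], hval⟩
  rw [h1, h2, h3]

lemma cw_merge_c (ρ : Γ → ℤ) (C D : Finset Γ) (m n : ℕ) (hmn : m < n)
    (hC : ∀ x ∈ C, 1 ≤ ρ x ∧ ρ x ≤ (m : ℤ))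
    (hD : ∀ x ∈ D, (m : ℤ) + 2 ≤ ρ x ∧ ρ x ≤ (n : ℤ)) :
    cw ρ C 0 m * ((aGen - bGen) * cw ρ D ((m : ℤ) + 1) (n - m - 1))
      = cw ρ (C ∪ D) 0 n := by
  classical
  rw [cw_split ρ (C ∪ D) 0 m n hmn]
  have h1 : cw ρ (C ∪ D) 0 m = cw ρ C 0 m := by
    refine cw_congr fun i hi => ?_
    constructor
    · rintro ⟨x, hx, hval⟩
      simp only [Finset.mem_union] at hx
      rcases hx with hx | hx
      · exact ⟨x, hx, hval⟩
      · exact absurd hval (by have := hD x hx; omega)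
    · rintro ⟨x, hx, hval⟩
      exact ⟨x, by simp [hx], hval⟩
  have h2 : (if ∃ x ∈ C ∪ D, ρ x = 0 + (m : ℤ) + 1 then bGen else aGen - bGen)
      = aGen - bGen := by
    rw [if_neg]
    rintro ⟨x, hx, hval⟩
    simp only [Finset.mem_union] at hx
    rcases hx with hx | hx
    · have := hC x hx; omega
    · have := hD x hx; omega
  have h3 : cw ρ (C ∪ D) (0 + (m : ℤ) + 1) (n - m - 1)
      = cw ρ D ((m : ℤ) + 1) (n - m - 1) := by
    refine cw_congr' (by omega) fun i hi => ?_
    constructor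
    · rintro ⟨x, hx, hval⟩
      simp only [Finset.mem_union] at hx
      rcases hx with hx | hx
      · exact absurd hval (by have := hC x hx; omega)
      · exact ⟨x, hx, hval⟩
    · rintro ⟨x, hx, hval⟩
      exact ⟨x, by simp [hx], hval⟩
  rw [h1, h2, h3]

lemma isChain_insert_union {C D : Finset Γ} {y : Γ}
    (hC : IsChain (· ≤ ·) (↑C : Set Γ)) (hD : IsChain (· ≤ ·) (↑D : Set Γ))
    (h1 : ∀ x ∈ C, x ≤ y) (h2 : ∀ d ∈ D, y ≤ d) :
    IsChain (· ≤ ·) (↑(insert y (C ∪ D)) : Set Γ) := by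
  intro u hu v hv hne
  simp only [Finset.coe_insert, Set.mem_insert_iff, Finset.coe_union, Set.mem_union,
    Finset.mem_coe] at hu hv
  rcases hu with rfl | hu | hu <;> rcases hv with rfl | hv | hv
  · exact absurd rfl hne
  · exact Or.inr (h1 v hv)
  · exact Or.inl (h2 v hv)
  · exact Or.inl (h1 u hu)
  · exact hC hu hv hne
  · exact Or.inl (le_trans (h1 u hu) (h2 v hv))
  · exact Or.inr (h2 u hu)
  · exact Or.inr (le_trans (h1 v hv) (h2 u hu))
  · exact hD hu hv hne

lemma exists_least_of_chain {s : Finset Γ} (hs : IsChain (· ≤ ·) (↑s : Set Γ))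
    (hne : s.Nonempty) : ∃ m ∈ s, ∀ x ∈ s, m ≤ x := by
  obtain ⟨m, hm, hmin⟩ : ∃ m ∈ s, ∀ x ∈ s, ¬x < m := by
    obtain ⟨m, hm⟩ := s.exists_minimal hne
    exact ⟨m, hm.prop, fun x hx hlt => lt_irrefl _ (lt_of_lt_of_le hlt (hm.2 hx hlt.le))⟩
  refine ⟨m, hm, fun x hx => ?_⟩
  rcases eq_or_ne x m with rfl | hne'
  · exact le_rfl
  rcases hs hx hm hne' with h | h
  · exact absurd (lt_of_le_of_ne h hne') (hmin x hx)
  · exact h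

lemma exists_greatest_of_chain {s : Finset Γ} (hs : IsChain (· ≤ ·) (↑s : Set Γ))
    (hne : s.Nonempty) : ∃ m ∈ s, ∀ x ∈ s, x ≤ m := by
  obtain ⟨m, hm, hmax⟩ : ∃ m ∈ s, ∀ x ∈ s, ¬m < x := by
    obtain ⟨m, hm⟩ := s.exists_maximal hne
    exact ⟨m, hm.prop, fun x hx hlt => lt_irrefl _ (lt_of_lt_of_le hlt (hm.2 hx hlt.le))⟩
  refine ⟨m, hm, fun x hx => ?_⟩
  rcases eq_or_ne x m with rfl | hne'
  · exact le_rfl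
  rcases hs hx hm hne' with h | h
  · exact h
  · exact absurd (lt_of_le_of_ne h (Ne.symm hne')) (hmax x hx)

open Classical in
noncomputable def leastC (d : Γ) (s : Finset Γ) : Γ :=
  if h : ∃ m ∈ s, ∀ x ∈ s, m ≤ x then h.choose else d

lemma leastC_spec {d : Γ} {s : Finset Γ} (h : ∃ m ∈ s, ∀ x ∈ s, m ≤ x) :
    leastC d s ∈ s ∧ ∀ x ∈ s, leastC d s ≤ x := by
  rw [leastC, dif_pos h]
  exact ⟨h.choose_spec.1, h.choose_spec.2⟩

lemma leastC_eq {d m : Γ} {s : Finset Γ} (hm : m ∈ s) (hle : ∀ x ∈ s, m ≤ x) :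
    leastC d s = m := by
  have h : ∃ m ∈ s, ∀ x ∈ s, m ≤ x := ⟨m, hm, hle⟩
  obtain ⟨h1, h2⟩ := leastC_spec (d := d) h
  exact le_antisymm (h2 m hm) (hle _ h1)

open Classical in
noncomputable def greatC (d : Γ) (s : Finset Γ) : Γ :=
  if h : ∃ m ∈ s, ∀ x ∈ s, x ≤ m then h.choose else d

lemma greatC_spec {d : Γ} {s : Finset Γ} (h : ∃ m ∈ s, ∀ x ∈ s, x ≤ m) :
    greatC d s ∈ s ∧ ∀ x ∈ s, x ≤ greatC d s := by
  rw [greatC, dif_pos h]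
  exact ⟨h.choose_spec.1, h.choose_spec.2⟩

lemma greatC_eq {d m : Γ} {s : Finset Γ} (hm : m ∈ s) (hle : ∀ x ∈ s, x ≤ m) :
    greatC d s = m := by
  have h : ∃ m ∈ s, ∀ x ∈ s, x ≤ m := ⟨m, hm, hle⟩
  obtain ⟨h1, h2⟩ := greatC_spec (d := d) h
  exact le_antisymm (hle _ h1) (h2 m hm)

lemma cw_merge_cc (ρ : Γ → ℤ) (C D : Finset Γ) (m n : ℕ) (hmn : m + 1 < n)
    (hC : ∀ x ∈ C, 1 ≤ ρ x ∧ ρ x ≤ (m : ℤ))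
    (hD : ∀ x ∈ D, (m : ℤ) + 3 ≤ ρ x ∧ ρ x ≤ (n : ℤ)) :
    cw ρ C 0 m * ((aGen - bGen) * ((aGen - bGen) * cw ρ D ((m : ℤ) + 2) (n - m - 2)))
      = cw ρ (C ∪ D) 0 n := by
  classical
  rw [← cw_merge_c ρ C D m n (by omega) hC (fun x hx => ⟨by have := hD x hx; omega, (hD x hx).2⟩)]
  have key : cw ρ D ((m : ℤ) + 1) (n - m - 1)
      = (aGen - bGen) * cw ρ D ((m : ℤ) + 2) (n - m - 2) := by
    rw [cw_split ρ D ((m : ℤ) + 1) 0 (n - m - 1) (by omega), cw_zero, one_mul]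
    congr 1
    exact if_neg (by rintro ⟨x, hx, hval⟩; have := hD x hx; omega)
  rw [key]

lemma cw_merge_cb (ρ : Γ → ℤ) (C D : Finset Γ) (y : Γ) (m n : ℕ) (hmn : m + 1 < n)
    (hy : ρ y = (m : ℤ) + 2)
    (hC : ∀ x ∈ C, 1 ≤ ρ x ∧ ρ x ≤ (m : ℤ))
    (hD : ∀ x ∈ D, (m : ℤ) + 3 ≤ ρ x ∧ ρ x ≤ (n : ℤ)) :
    cw ρ C 0 m * ((aGen - bGen) * (bGen * cw ρ D ((m : ℤ) + 2) (n - m - 2)))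
      = cw ρ (insert y (C ∪ D)) 0 n := by
  classical
  have hD' : ∀ x ∈ insert y D, (m : ℤ) + 2 ≤ ρ x ∧ ρ x ≤ (n : ℤ) := by
    intro x hx
    rcases Finset.mem_insert.mp hx with rfl | hx
    · constructor <;> omega
    · have := hD x hx; constructor <;> omega
  have h := cw_merge_c ρ C (insert y D) m n (by omega) hC hD'
  rw [Finset.union_insert] at h
  rw [← h]
  have key : cw ρ (insert y D) ((m : ℤ) + 1) (n - m - 1)
      = bGen * cw ρ D ((m : ℤ) + 2) (n - m - 2) := by
    rw [cw_split ρ (insert y D) ((m : ℤ) + 1) 0 (n - m - 1) (by omega), cw_zero, one_mul,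
      if_pos ⟨y, Finset.mem_insert_self _ _, by push_cast; omega⟩]
    congr 1
    refine cw_congr' (by push_cast; ring) fun i hi => ?_
    constructor
    · rintro ⟨x, hx, hval⟩
      rcases Finset.mem_insert.mp hx with rfl | hx
      · exfalso; omega
      · exact ⟨x, hx, hval⟩
    · rintro ⟨x, hx, hval⟩
      exact ⟨x, Finset.mem_insert_of_mem hx, hval⟩
  rw [key]

lemma flagCount_eq (P : Set Γ) (ρ' : Γ → ℤ) (S : Finset ℕ) :
    flagCount P ρ' S = ((chainsIn P).filter
      (fun C => C.card = S.card ∧ C.image ρ' = S.image (fun i : ℕ => (i : ℤ)))).card := by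
  classical
  rw [flagCount, Nat.card_eq_fintype_card, Fintype.card_subtype]
  congr 1
  ext C
  simp [chainsIn, and_assoc]

lemma abPsi_eq_sum (P : Set Γ) (ρ ρ' : Γ → ℤ) (k : ℤ) (n : ℕ)
    (hρ' : ∀ z ∈ P, ρ' z = ρ z - k)
    (hmono : ∀ x ∈ P, ∀ y ∈ P, x < y → ρ x < ρ y)
    (hrange : ∀ x ∈ P, k + 1 ≤ ρ x ∧ ρ x ≤ k + n) :
    abPsi P ρ' n = ∑ C ∈ chainsIn P, cw ρ C k n := by
  classical
  unfold abPsi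
  rw [finsum_cond_eq_sum_of_cond_iff (t := (Finset.Icc 1 n).powerset)
    (fun S => (flagCount P ρ' S : ABAlg) * wordOf S n)
    (fun {S} _ => (Finset.mem_powerset).symm)]
  have hval : ∀ C ∈ chainsIn P, ∀ x ∈ C, 1 ≤ ρ' x ∧ ρ' x ≤ n := by
    intro C hC x hx
    have hxP : x ∈ P := (mem_chainsIn.mp hC).1 hx
    have h1 := hrange x hxP
    have h2 := hρ' x hxP
    omega
  have hinj : ∀ C ∈ chainsIn P, Set.InjOn ρ' (↑C : Set Γ) := by
    intro C hC x hx y hy hxy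
    by_contra hne
    have hch := (mem_chainsIn.mp hC).2
    have hP := (mem_chainsIn.mp hC).1
    rcases hch hx hy hne with h | h
    · have := hmono x (hP hx) y (hP hy) (lt_of_le_of_ne h hne)
      have hx' := hρ' x (hP hx); have hy' := hρ' y (hP hy)
      omega
    · have := hmono y (hP hy) x (hP hx) (lt_of_le_of_ne h (Ne.symm hne))
      have hx' := hρ' x (hP hx); have hy' := hρ' y (hP hy)
      omega
  have hmaps : ∀ C ∈ chainsIn P,
      (C.image ρ').image Int.toNat ∈ (Finset.Icc 1 n).powerset := by
    intro C hC
    rw [Finset.mem_powerset]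
    intro v hv
    simp only [Finset.mem_image] at hv
    obtain ⟨w, hw, rfl⟩ := hv
    obtain ⟨x, hx, rfl⟩ := hw
    have := hval C hC x hx
    rw [Finset.mem_Icc]
    omega
  rw [← Finset.sum_fiberwise_of_maps_to hmaps (fun C => cw ρ C k n)]
  refine Finset.sum_congr rfl fun S hS => ?_
  rw [Finset.mem_powerset] at hS
  have hSval : ∀ v ∈ S, 1 ≤ v ∧ v ≤ n := by
    intro v hv
    have := hS hv
    rw [Finset.mem_Icc] at this
    omega
  have hfc : ∀ C ∈ chainsIn P,
      ((C.image ρ').image Int.toNat = S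
        ↔ (C.card = S.card ∧ C.image ρ' = S.image (fun i : ℕ => (i : ℤ)))) := by
    intro C hC
    constructor
    · intro h
      have himg : S.image (fun i : ℕ => (i : ℤ)) = C.image ρ' := by
        rw [← h, Finset.image_image]
        refine Finset.image_congr (fun v hv => ?_) |>.trans (Finset.image_id)
        simp only [Function.comp, id_eq]
        obtain ⟨x, hx, rfl⟩ := Finset.mem_image.mp hv
        have := hval C hC x hx
        omega
      refine ⟨?_, himg.symm⟩
      rw [← h]
      rw [Finset.card_image_of_injOn, Finset.card_image_of_injOn (hinj C hC)]
      intro u hu v hv huv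
      obtain ⟨x, hx, rfl⟩ := Finset.mem_image.mp hu
      obtain ⟨z, hz, rfl⟩ := Finset.mem_image.mp hv
      have := hval C hC x hx; have := hval C hC z hz
      omega
    · rintro ⟨hcard, himg⟩
      rw [himg, Finset.image_image]
      refine (Finset.image_congr (fun v hv => ?_)).trans (Finset.image_id)
      simp only [Function.comp, Int.toNat_natCast, id_eq]
  rw [Finset.filter_congr hfc]
  have hword : ∀ C ∈ (chainsIn P).filter
      (fun C => C.card = S.card ∧ C.image ρ' = S.image (fun i : ℕ => (i : ℤ))),
      cw ρ C k n = wordOf S n := by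
    intro C hCf
    obtain ⟨hC, hcard, himg⟩ := Finset.mem_filter.mp hCf
    unfold cw wordOf
    congr 1
    refine List.map_congr_left fun i hi => ?_
    rw [List.mem_range] at hi
    refine if_congr ?_ rfl rfl
    constructor
    · rintro ⟨x, hx, hvalx⟩
      have h1 : ρ' x ∈ C.image ρ' := Finset.mem_image_of_mem _ hx
      rw [himg] at h1
      obtain ⟨v, hv, hv2⟩ := Finset.mem_image.mp h1
      have := hρ' x ((mem_chainsIn.mp hC).1 hx)
      have : v = i + 1 := by omega
      rwa [← this]
    · intro hiS
      have h1 : ((i+1 : ℕ) : ℤ) ∈ S.image (fun i : ℕ => (i : ℤ)) :=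
        Finset.mem_image_of_mem _ hiS
      rw [← himg] at h1
      obtain ⟨x, hx, hx2⟩ := Finset.mem_image.mp h1
      refine ⟨x, hx, ?_⟩
      have := hρ' x ((mem_chainsIn.mp hC).1 hx)
      omega
  rw [Finset.sum_congr rfl hword, Finset.sum_const, nsmul_eq_mul, flagCount_eq]

lemma wordOf_split_top {S : Finset ℕ} {m : ℕ} (hm : 1 ≤ m) (hmS : m ∈ S) :
    wordOf S m = wordOf (S.erase m) (m - 1) * bGen := by
  unfold wordOf
  have h1 := List.range_succ (n := m - 1)
  rw [Nat.succ_eq_add_one, show m - 1 + 1 = m by omega] at h1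
  rw [h1, List.map_append, List.prod_append]
  congr 1
  · apply congrArg
    refine List.map_congr_left fun i hi => ?_
    rw [List.mem_range] at hi
    refine if_congr ?_ rfl rfl
    rw [Finset.mem_erase]
    constructor
    · intro h; exact ⟨by omega, h⟩
    · exact fun h => h.2
  · simp only [List.map_cons, List.map_nil, List.prod_cons, List.prod_nil, mul_one]
    rw [if_pos (by rwa [show m - 1 + 1 = m by omega])]

lemma abPsi_finset {α : Type*} [PartialOrder α] (P : Set α) (ρ' : α → ℤ) (n : ℕ) :
    abPsi P ρ' n = ∑ S ∈ (Finset.Icc 1 n).powerset,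
      (flagCount P ρ' S : ABAlg) * wordOf S n := by
  unfold abPsi
  exact finsum_cond_eq_sum_of_cond_iff _ (fun {S} _ => (Finset.mem_powerset).symm)

lemma localAbPsi_eq {α : Type*} [PartialOrder α] (P Q : Set α) (ρ' : α → ℤ) (m : ℕ)
    (hm : 1 ≤ m) :
    localAbPsi P Q ρ' m = abPsi P ρ' m - abPsi Q ρ' (m - 1) * aGen := by
  classical
  have h2 : (∑ᶠ (S : Finset ℕ) (_ : S ⊆ Finset.Icc 1 m ∧ m ∈ S),
      (flagCount Q ρ' (S.erase m) : ABAlg) * wordOf S m)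
      = abPsi Q ρ' (m - 1) * bGen := by
    rw [finsum_cond_eq_sum_of_cond_iff
      (t := ((Finset.Icc 1 m).powerset.filter (fun S => m ∈ S)))
      (fun S => (flagCount Q ρ' (S.erase m) : ABAlg) * wordOf S m)
      (fun {S} _ => by simp only [Finset.mem_filter, Finset.mem_powerset])]
    rw [abPsi_finset, Finset.sum_mul]
    refine Finset.sum_nbij' (i := fun S => S.erase m) (j := fun S' => insert m S')
      ?_ ?_ ?_ ?_ ?_
    · intro S hS
      rw [Finset.mem_filter, Finset.mem_powerset] at hS
      rw [Finset.mem_powerset]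
      intro v hv
      rw [Finset.mem_erase] at hv
      have := hS.1 hv.2
      rw [Finset.mem_Icc] at this ⊢
      omega
    · intro S' hS'
      rw [Finset.mem_powerset] at hS'
      rw [Finset.mem_filter, Finset.mem_powerset]
      refine ⟨?_, Finset.mem_insert_self _ _⟩
      intro v hv
      rcases Finset.mem_insert.mp hv with rfl | hv
      · rw [Finset.mem_Icc]; omega
      · have := hS' hv
        rw [Finset.mem_Icc] at this ⊢
        omega
    · intro S hS
      rw [Finset.mem_filter] at hS
      exact Finset.insert_erase hS.2
    · intro S' hS'
      rw [Finset.mem_powerset] at hS'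
      refine Finset.erase_insert fun hmem => ?_
      have := hS' hmem
      rw [Finset.mem_Icc] at this
      omega
    · intro S hS
      rw [Finset.mem_filter] at hS
      rw [wordOf_split_top hm hS.2, mul_assoc]
  unfold localAbPsi abPsiSemi
  rw [h2]
  noncomm_ring

/-- Bundled hypotheses for the main combinatorial lemmas. -/
structure Setup (ρ : Γ → ℤ) (b t q : Γ) (jn : Γ → Γ) : Prop where
  mono : ∀ ⦃x y : Γ⦄, x < y → ρ x < ρ y
  hb : ∀ z, b ≤ z
  ht : ∀ z, z ≤ t
  hρb : ρ b = 0
  hjn : ∀ z : Γ, IsLeast {w : Γ | z ≤ w ∧ q ≤ w} (jn z)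
  hqb : q ≠ b
  hqt : q ≠ t

namespace Setup

variable {ρ : Γ → ℤ} {b t q : Γ} {jn : Γ → Γ} (h : Setup ρ b t q jn)
include h

lemma le_jn (z : Γ) : z ≤ jn z := (h.hjn z).1.1
lemma q_le_jn (z : Γ) : q ≤ jn z := (h.hjn z).1.2
lemma jn_le {z w : Γ} (h1 : z ≤ w) (h2 : q ≤ w) : jn z ≤ w := (h.hjn z).2 ⟨h1, h2⟩
lemma jn_mono {z w : Γ} (hzw : z ≤ w) : jn z ≤ jn w :=
  h.jn_le (le_trans hzw (h.le_jn w)) (h.q_le_jn w)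
lemma jn_b : jn b = q :=
  le_antisymm (h.jn_le (h.hb q) le_rfl) (h.q_le_jn b)
lemma q_lt_t : q < t := lt_of_le_of_ne (h.ht q) h.hqt
lemma b_lt_q : b < q := lt_of_le_of_ne (h.hb q) (Ne.symm h.hqb)
lemma ne_b_of_q_le {z : Γ} (hz : q ≤ z) : z ≠ b := by
  rintro rfl
  exact h.hqb (le_antisymm hz (h.hb q))
lemma rank_pos {z : Γ} (hz : z ≠ b) : 1 ≤ ρ z := by
  have := h.mono (lt_of_le_of_ne (h.hb z) (Ne.symm hz))
  have h0 := h.hρb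
  omega
lemma rank_lt_top {z : Γ} (hz : z ≠ t) : ρ z < ρ t :=
  h.mono (lt_of_le_of_ne (h.ht z) hz)
lemma jn_ne_self {x : Γ} (hx : ¬ q ≤ x) : x ≠ jn x := by
  intro hh
  exact hx (hh ▸ h.q_le_jn x)
lemma lt_jn {x : Γ} (hx : ¬ q ≤ x) : x < jn x :=
  lt_of_le_of_ne (h.le_jn x) (h.jn_ne_self hx)

end Setup

/-- The join of (the greatest element of) a chain with `q`; `q` itself for the empty chain. -/
noncomputable def ystar (jn : Γ → Γ) (b : Γ) (C : Finset Γ) : Γ :=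
  jn (greatC b (insert b C))

namespace Setup

variable {ρ : Γ → ℤ} {b t q : Γ} {jn : Γ → Γ} (h : Setup ρ b t q jn)
include h

lemma chain_insert_b {C : Finset Γ} (hC : IsChain (· ≤ ·) (↑C : Set Γ)) :
    IsChain (· ≤ ·) (↑(insert b C) : Set Γ) := by
  have := isChain_insert_union (C := (∅ : Finset Γ)) (D := C) (y := b)
    (by simp [IsChain]) hC (by simp) (fun d _ => h.hb d)
  rwa [Finset.empty_union] at this

lemma greatC_insert_b_spec {C : Finset Γ} (hC : IsChain (· ≤ ·) (↑C : Set Γ)) :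
    greatC b (insert b C) ∈ insert b C ∧ ∀ x ∈ insert b C, x ≤ greatC b (insert b C) :=
  greatC_spec (exists_greatest_of_chain (h.chain_insert_b hC) ⟨b, Finset.mem_insert_self _ _⟩)

lemma q_le_ystar (C : Finset Γ) : q ≤ ystar jn b C := h.q_le_jn _

lemma jn_le_ystar {C : Finset Γ} (hC : IsChain (· ≤ ·) (↑C : Set Γ)) {x : Γ} (hx : x ∈ C) :
    jn x ≤ ystar jn b C :=
  h.jn_mono ((h.greatC_insert_b_spec hC).2 x (Finset.mem_insert_of_mem hx))

lemma ystar_le_iff {C : Finset Γ} (hC : IsChain (· ≤ ·) (↑C : Set Γ)) {y : Γ} (hy : q ≤ y) :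
    ystar jn b C ≤ y ↔ ∀ x ∈ C, jn x ≤ y := by
  constructor
  · exact fun hle x hx => le_trans (h.jn_le_ystar hC hx) hle
  · intro hall
    rcases Finset.mem_insert.mp (h.greatC_insert_b_spec hC).1 with hgb | hgC
    · rw [ystar, hgb, h.jn_b]; exact hy
    · exact hall _ hgC

lemma ystar_lt_iff {C : Finset Γ} (hC : IsChain (· ≤ ·) (↑C : Set Γ)) {y : Γ} (hy : q < y) :
    ystar jn b C < y ↔ ∀ x ∈ C, jn x < y := by
  constructor
  · exact fun hlt x hx => lt_of_le_of_lt (h.jn_le_ystar hC hx) hlt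
  · intro hall
    rcases Finset.mem_insert.mp (h.greatC_insert_b_spec hC).1 with hgb | hgC
    · rw [ystar, hgb, h.jn_b]; exact hy
    · exact hall _ hgC

end Setup

namespace Setup

variable {ρ : Γ → ℤ} {b t q : Γ} {jn : Γ → Γ} (h : Setup ρ b t q jn)
include h

open Classical in
lemma P1 (n : ℕ) :
    ∑ C ∈ chainsIn {z : Γ | z ≠ b ∧ z ≠ t}, cw ρ C 0 n
      = ∑ C ∈ chainsIn {x : Γ | ¬ q ≤ x ∧ x ≠ b}, cw ρ C 0 n
      + ∑ y ∈ Finset.univ.filter (fun y : Γ => q ≤ y ∧ y < t),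
          ∑ C ∈ chainsIn {x : Γ | ¬ q ≤ x ∧ jn x ≤ y ∧ x ≠ b},
            ∑ D ∈ chainsIn {z : Γ | y ≤ z ∧ z ≠ y ∧ z ≠ t},
              cw ρ (insert y (C ∪ D)) 0 n := by
  classical
  rw [← Finset.sum_filter_add_sum_filter_not (chainsIn {z : Γ | z ≠ b ∧ z ≠ t})
    (fun C => ∃ x ∈ C, q ≤ x) (fun C => cw ρ C 0 n), add_comm]
  congr 1
  · -- chains avoiding Y
    refine Finset.sum_congr ?_ (fun _ _ => rfl)
    ext C
    simp only [Finset.mem_filter, mem_chainsIn, Set.subset_def, Finset.mem_coe,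
      Set.mem_setOf_eq, not_exists, not_and]
    constructor
    · rintro ⟨⟨hsub, hch⟩, hno⟩
      exact ⟨fun x hx => ⟨hno x hx, (hsub x hx).1⟩, hch⟩
    · rintro ⟨hsub, hch⟩
      refine ⟨⟨fun x hx => ⟨(hsub x hx).2, fun hxt => (hsub x hx).1 (hxt ▸ h.ht q)⟩, hch⟩,
        fun x hx => (hsub x hx).1⟩
  · -- chains meeting Y
    rw [Finset.sum_congr rfl (fun y _ => Finset.sum_sigma'
        (chainsIn {x : Γ | ¬ q ≤ x ∧ jn x ≤ y ∧ x ≠ b})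
        (fun _ => chainsIn {z : Γ | y ≤ z ∧ z ≠ y ∧ z ≠ t})
        (fun C D => cw ρ (insert y (C ∪ D)) 0 n)),
      Finset.sum_sigma' (Finset.univ.filter (fun y : Γ => q ≤ y ∧ y < t))]
    refine Finset.sum_nbij'
      (i := fun C => ⟨leastC b (C.filter (fun x => q ≤ x)),
        C.filter (fun x => ¬ q ≤ x),
        (C.filter (fun x => q ≤ x)).erase (leastC b (C.filter (fun x => q ≤ x)))⟩)
      (j := fun p => insert p.1 (p.2.1 ∪ p.2.2)) ?_ ?_ ?_ ?_ ?_
    · -- i maps into the sigma set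
      intro C hC
      rw [Finset.mem_filter] at hC
      obtain ⟨hCmem, x0, hx0, hqx0⟩ := hC
      rw [mem_chainsIn] at hCmem
      obtain ⟨hsub, hch⟩ := hCmem
      set CY := C.filter (fun x => q ≤ x) with hCY
      have hCYsub : CY ⊆ C := Finset.filter_subset _ _
      have hCYchain : IsChain (· ≤ ·) (↑CY : Set Γ) :=
        hch.mono (Finset.coe_subset.mpr hCYsub)
      have hCYne : CY.Nonempty := ⟨x0, Finset.mem_filter.mpr ⟨hx0, hqx0⟩⟩
      obtain ⟨hy0mem, hy0le⟩ := leastC_spec (d := b) (exists_least_of_chain hCYchain hCYne)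
      set y0 := leastC b CY with hy0
      have hy0C : y0 ∈ C := hCYsub hy0mem
      have hqy0 : q ≤ y0 := (Finset.mem_filter.mp hy0mem).2
      have hy0G : y0 ∈ {z : Γ | z ≠ b ∧ z ≠ t} := hsub hy0C
      rw [Finset.mem_sigma, Finset.mem_sigma]
      refine ⟨Finset.mem_filter.mpr ⟨Finset.mem_univ _,
        hqy0, lt_of_le_of_ne (h.ht y0) hy0G.2⟩, ?_, ?_⟩
      · rw [mem_chainsIn]
        constructor
        · intro x hx
          rw [Finset.mem_coe, Finset.mem_filter] at hx
          obtain ⟨hxC, hnqx⟩ := hx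
          have hxney : x ≠ y0 := fun hh => hnqx (hh ▸ hqy0)
          have hxy : x ≤ y0 := by
            rcases hch hxC hy0C hxney with h1 | h1
            · exact h1
            · exact absurd (le_trans hqy0 h1) hnqx
          exact ⟨hnqx, h.jn_le hxy hqy0, (hsub hxC).1⟩
        · exact hch.mono (Finset.coe_subset.mpr (Finset.filter_subset _ _))
      · rw [mem_chainsIn]
        constructor
        · intro z hz
          rw [Finset.mem_coe, Finset.mem_erase] at hz
          obtain ⟨hzney, hzCY⟩ := hz
          exact ⟨hy0le z hzCY, hzney, (hsub (hCYsub hzCY)).2⟩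
        · exact hCYchain.mono (Finset.coe_subset.mpr (Finset.erase_subset _ _))
    · -- j maps back
      rintro ⟨y, Cx, D⟩ hp
      rw [Finset.mem_sigma, Finset.mem_sigma] at hp
      obtain ⟨hy, hCx, hD⟩ := hp
      rw [Finset.mem_filter] at hy
      obtain ⟨-, hqy, hyt⟩ := hy
      rw [mem_chainsIn] at hCx hD
      obtain ⟨hCxsub, hCxch⟩ := hCx
      obtain ⟨hDsub, hDch⟩ := hD
      have hCxle : ∀ x ∈ Cx, x ≤ y := fun x hx =>
        le_trans (h.le_jn x) (hCxsub hx).2.1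
      have hDge : ∀ d ∈ D, y ≤ d := fun d hd => (hDsub hd).1
      rw [Finset.mem_filter]
      constructor
      · rw [mem_chainsIn]
        constructor
        · intro z hz
          rw [Finset.mem_coe, Finset.mem_insert, Finset.mem_union] at hz
          rcases hz with rfl | hz | hz
          · exact ⟨h.ne_b_of_q_le hqy, ne_of_lt hyt⟩
          · exact ⟨(hCxsub hz).2.2, fun hh => absurd (hh ▸ hCxle z hz : t ≤ y)
              (not_le_of_gt hyt)⟩
          · exact ⟨h.ne_b_of_q_le (le_trans hqy (hDge z hz)), (hDsub hz).2.2⟩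
        · exact isChain_insert_union hCxch hDch hCxle hDge
      · exact ⟨y, Finset.mem_insert_self _ _, hqy⟩
    · -- left inverse
      intro C hC
      rw [Finset.mem_filter] at hC
      obtain ⟨hCmem, x0, hx0, hqx0⟩ := hC
      rw [mem_chainsIn] at hCmem
      obtain ⟨hsub, hch⟩ := hCmem
      set CY := C.filter (fun x => q ≤ x) with hCY
      have hCYchain : IsChain (· ≤ ·) (↑CY : Set Γ) :=
        hch.mono (Finset.coe_subset.mpr (Finset.filter_subset _ _))
      have hCYne : CY.Nonempty := ⟨x0, Finset.mem_filter.mpr ⟨hx0, hqx0⟩⟩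
      obtain ⟨hy0mem, hy0le⟩ := leastC_spec (d := b) (exists_least_of_chain hCYchain hCYne)
      ext z
      simp only [Finset.mem_insert, Finset.mem_union, Finset.mem_erase, Finset.mem_filter]
      constructor
      · rintro (rfl | hz | hz)
        · exact (Finset.mem_filter.mp hy0mem).1
        · exact hz.1
        · exact (Finset.mem_filter.mp hz.2).1
      · intro hzC
        by_cases hqz : q ≤ z
        · rcases eq_or_ne z (leastC b CY) with rfl | hne
          · exact Or.inl rfl
          · exact Or.inr (Or.inr ⟨hne, Finset.mem_filter.mpr ⟨hzC, hqz⟩⟩)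
        · exact Or.inr (Or.inl ⟨hzC, hqz⟩)
    · -- right inverse
      rintro ⟨y, Cx, D⟩ hp
      rw [Finset.mem_sigma, Finset.mem_sigma] at hp
      obtain ⟨hy, hCx, hD⟩ := hp
      rw [Finset.mem_filter] at hy
      obtain ⟨-, hqy, hyt⟩ := hy
      rw [mem_chainsIn] at hCx hD
      obtain ⟨hCxsub, hCxch⟩ := hCx
      obtain ⟨hDsub, hDch⟩ := hD
      have hfilq : (insert y (Cx ∪ D)).filter (fun x => q ≤ x) = insert y D := by
        ext z
        simp only [Finset.mem_filter, Finset.mem_insert, Finset.mem_union]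
        constructor
        · rintro ⟨rfl | hz | hz, hqz⟩
          · exact Or.inl rfl
          · exact absurd hqz (hCxsub hz).1
          · exact Or.inr hz
        · rintro (rfl | hz)
          · exact ⟨Or.inl rfl, hqy⟩
          · exact ⟨Or.inr (Or.inr hz), le_trans hqy (hDsub hz).1⟩
      have hfilnq : (insert y (Cx ∪ D)).filter (fun x => ¬ q ≤ x) = Cx := by
        ext z
        simp only [Finset.mem_filter, Finset.mem_insert, Finset.mem_union]
        constructor
        · rintro ⟨rfl | hz | hz, hqz⟩
          · exact absurd hqy hqz
          · exact hz
          · exact absurd (le_trans hqy (hDsub hz).1) hqz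
        · intro hz
          exact ⟨Or.inr (Or.inl hz), (hCxsub hz).1⟩
      have hleast : leastC b (insert y D) = y :=
        leastC_eq (Finset.mem_insert_self _ _) (fun x hx => by
          rcases Finset.mem_insert.mp hx with rfl | hx
          · exact le_rfl
          · exact (hDsub hx).1)
      have hyD : y ∉ D := fun hh => (hDsub hh).2.1 rfl
      dsimp only
      rw [hfilq, hleast, hfilnq, Finset.erase_insert hyD]
    · -- values agree
      intro C hC
      rw [Finset.mem_filter] at hC
      obtain ⟨hCmem, x0, hx0, hqx0⟩ := hC
      rw [mem_chainsIn] at hCmem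
      obtain ⟨hsub, hch⟩ := hCmem
      set CY := C.filter (fun x => q ≤ x) with hCY
      have hCYchain : IsChain (· ≤ ·) (↑CY : Set Γ) :=
        hch.mono (Finset.coe_subset.mpr (Finset.filter_subset _ _))
      have hCYne : CY.Nonempty := ⟨x0, Finset.mem_filter.mpr ⟨hx0, hqx0⟩⟩
      obtain ⟨hy0mem, hy0le⟩ := leastC_spec (d := b) (exists_least_of_chain hCYchain hCYne)
      have : insert (leastC b CY) (C.filter (fun x => ¬ q ≤ x) ∪ CY.erase (leastC b CY))
          = C := by
        ext z
        simp only [Finset.mem_insert, Finset.mem_union, Finset.mem_erase, Finset.mem_filter]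
        constructor
        · rintro (rfl | hz | hz)
          · exact (Finset.mem_filter.mp hy0mem).1
          · exact hz.1
          · exact (Finset.mem_filter.mp hz.2).1
        · intro hzC
          by_cases hqz : q ≤ z
          · rcases eq_or_ne z (leastC b CY) with rfl | hne
            · exact Or.inl rfl
            · exact Or.inr (Or.inr ⟨hne, Finset.mem_filter.mpr ⟨hzC, hqz⟩⟩)
          · exact Or.inr (Or.inl ⟨hzC, hqz⟩)
      rw [this]

end Setup

namespace Setup

variable {ρ : Γ → ℤ} {b t q : Γ} {jn : Γ → Γ} (h : Setup ρ b t q jn)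
include h

lemma empty_mem_chainsIn (P : Set Γ) : (∅ : Finset Γ) ∈ chainsIn P := by
  rw [mem_chainsIn]
  constructor
  · simp
  · simp [IsChain]

open Classical in
lemma P2 (n : ℕ) :
    ∑ y ∈ Finset.univ.filter (fun y : Γ => q ≤ y ∧ y < t),
        ∑ C ∈ chainsIn {x : Γ | ¬ q ≤ x ∧ jn x ≤ y ∧ x ≠ b},
          ∑ D ∈ chainsIn {z : Γ | y ≤ z ∧ z ≠ y ∧ z ≠ t},
            cw ρ (C ∪ D) 0 n
      = (∑ C ∈ chainsIn {x : Γ | ¬ q ≤ x ∧ jn x < t ∧ x ≠ b}, cw ρ C 0 n)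
      + ∑ y ∈ Finset.univ.filter (fun y : Γ => q < y ∧ y < t),
          ((∑ C ∈ chainsIn {x : Γ | ¬ q ≤ x ∧ jn x < y ∧ x ≠ b},
              ∑ D ∈ chainsIn {z : Γ | y ≤ z ∧ z ≠ y ∧ z ≠ t}, cw ρ (C ∪ D) 0 n)
          + ∑ C ∈ chainsIn {x : Γ | ¬ q ≤ x ∧ jn x < y ∧ x ≠ b},
              ∑ D ∈ chainsIn {z : Γ | y ≤ z ∧ z ≠ y ∧ z ≠ t},
                cw ρ (insert y (C ∪ D)) 0 n) := by
  classical
  -- sigma-ize the LHS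
  rw [Finset.sum_congr rfl (fun y _ => Finset.sum_sigma'
      (chainsIn {x : Γ | ¬ q ≤ x ∧ jn x ≤ y ∧ x ≠ b})
      (fun _ => chainsIn {z : Γ | y ≤ z ∧ z ≠ y ∧ z ≠ t})
      (fun C D => cw ρ (C ∪ D) 0 n)),
    Finset.sum_sigma' (Finset.univ.filter (fun y : Γ => q ≤ y ∧ y < t))]
  rw [← Finset.sum_filter_add_sum_filter_not
    ((Finset.univ.filter (fun y : Γ => q ≤ y ∧ y < t)).sigma
      (fun y => (chainsIn {x : Γ | ¬ q ≤ x ∧ jn x ≤ y ∧ x ≠ b}).sigma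
        (fun _ => chainsIn {z : Γ | y ≤ z ∧ z ≠ y ∧ z ≠ t})))
    (fun p => ystar jn b p.2.1 < p.1)]
  have hpred : ∑ p ∈ ((Finset.univ.filter (fun y : Γ => q ≤ y ∧ y < t)).sigma
      (fun y => (chainsIn {x : Γ | ¬ q ≤ x ∧ jn x ≤ y ∧ x ≠ b}).sigma
        (fun _ => chainsIn {z : Γ | y ≤ z ∧ z ≠ y ∧ z ≠ t}))).filter
          (fun p => ystar jn b p.2.1 < p.1),
        cw ρ (p.2.1 ∪ p.2.2) 0 n
      = ∑ y ∈ Finset.univ.filter (fun y : Γ => q < y ∧ y < t),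
          ∑ C ∈ chainsIn {x : Γ | ¬ q ≤ x ∧ jn x < y ∧ x ≠ b},
            ∑ D ∈ chainsIn {z : Γ | y ≤ z ∧ z ≠ y ∧ z ≠ t}, cw ρ (C ∪ D) 0 n := by
    rw [Finset.sum_congr rfl (fun y _ => Finset.sum_sigma'
        (chainsIn {x : Γ | ¬ q ≤ x ∧ jn x < y ∧ x ≠ b})
        (fun _ => chainsIn {z : Γ | y ≤ z ∧ z ≠ y ∧ z ≠ t})
        (fun C D => cw ρ (C ∪ D) 0 n)),
      Finset.sum_sigma' (Finset.univ.filter (fun y : Γ => q < y ∧ y < t))]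
    refine Finset.sum_nbij' (i := fun p => p) (j := fun p => p) ?_ ?_ ?_ ?_ ?_
    · rintro ⟨y, C, D⟩ hp
      rw [Finset.mem_filter, Finset.mem_sigma, Finset.mem_sigma] at hp
      obtain ⟨⟨hy, hC, hD⟩, hlt⟩ := hp
      rw [Finset.mem_filter] at hy
      obtain ⟨-, hqy, hyt⟩ := hy
      obtain ⟨hCsub, hCch⟩ := mem_chainsIn.mp hC
      rw [Finset.mem_sigma, Finset.mem_sigma]
      refine ⟨Finset.mem_filter.mpr ⟨Finset.mem_univ _,
        lt_of_le_of_lt (h.q_le_ystar C) hlt, hyt⟩, ?_, hD⟩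
      rw [mem_chainsIn]
      refine ⟨fun x hx => ⟨(hCsub hx).1,
        lt_of_le_of_lt (h.jn_le_ystar hCch hx) hlt, (hCsub hx).2.2⟩, hCch⟩
    · rintro ⟨y, C, D⟩ hp
      rw [Finset.mem_sigma, Finset.mem_sigma] at hp
      obtain ⟨hy, hC, hD⟩ := hp
      rw [Finset.mem_filter] at hy
      obtain ⟨-, hqy, hyt⟩ := hy
      obtain ⟨hCsub, hCch⟩ := mem_chainsIn.mp hC
      rw [Finset.mem_filter, Finset.mem_sigma, Finset.mem_sigma]
      refine ⟨⟨Finset.mem_filter.mpr ⟨Finset.mem_univ _, le_of_lt hqy, hyt⟩, ?_, hD⟩, ?_⟩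
      · rw [mem_chainsIn]
        exact ⟨fun x hx => ⟨(hCsub hx).1, le_of_lt (hCsub hx).2.1, (hCsub hx).2.2⟩, hCch⟩
      · dsimp only
        rw [h.ystar_lt_iff hCch hqy]
        exact fun x hx => (hCsub hx).2.1
    · rintro p _; rfl
    · rintro p _; rfl
    · rintro p _; rfl
  have hnpred : ∑ p ∈ ((Finset.univ.filter (fun y : Γ => q ≤ y ∧ y < t)).sigma
      (fun y => (chainsIn {x : Γ | ¬ q ≤ x ∧ jn x ≤ y ∧ x ≠ b}).sigma
        (fun _ => chainsIn {z : Γ | y ≤ z ∧ z ≠ y ∧ z ≠ t}))).filter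
          (fun p => ¬ ystar jn b p.2.1 < p.1),
        cw ρ (p.2.1 ∪ p.2.2) 0 n
      = (∑ C ∈ chainsIn {x : Γ | ¬ q ≤ x ∧ jn x < t ∧ x ≠ b}, cw ρ C 0 n)
      + ∑ y ∈ Finset.univ.filter (fun y : Γ => q < y ∧ y < t),
          ∑ C ∈ chainsIn {x : Γ | ¬ q ≤ x ∧ jn x < y ∧ x ≠ b},
            ∑ D ∈ chainsIn {z : Γ | y ≤ z ∧ z ≠ y ∧ z ≠ t},
              cw ρ (insert y (C ∪ D)) 0 n := by
    have step1 : ∑ p ∈ ((Finset.univ.filter (fun y : Γ => q ≤ y ∧ y < t)).sigma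
        (fun y => (chainsIn {x : Γ | ¬ q ≤ x ∧ jn x ≤ y ∧ x ≠ b}).sigma
          (fun _ => chainsIn {z : Γ | y ≤ z ∧ z ≠ y ∧ z ≠ t}))).filter
            (fun p => ¬ ystar jn b p.2.1 < p.1),
          cw ρ (p.2.1 ∪ p.2.2) 0 n
        = ∑ p ∈ (chainsIn {x : Γ | ¬ q ≤ x ∧ jn x < t ∧ x ≠ b}).sigma
            (fun C => chainsIn {z : Γ | ystar jn b C ≤ z ∧ z ≠ ystar jn b C ∧ z ≠ t}),
            cw ρ (p.1 ∪ p.2) 0 n := by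
      refine Finset.sum_nbij' (i := fun p => ⟨p.2.1, p.2.2⟩)
        (j := fun p => ⟨ystar jn b p.1, p.1, p.2⟩) ?_ ?_ ?_ ?_ ?_
      · rintro ⟨y, C, D⟩ hp
        rw [Finset.mem_filter, Finset.mem_sigma, Finset.mem_sigma] at hp
        obtain ⟨⟨hy, hC, hD⟩, hnlt⟩ := hp
        rw [Finset.mem_filter] at hy
        obtain ⟨-, hqy, hyt⟩ := hy
        obtain ⟨hCsub, hCch⟩ := mem_chainsIn.mp hC
        have hyeq : ystar jn b C = y := by
          refine eq_of_le_of_not_lt ?_ hnlt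
          rw [h.ystar_le_iff hCch hqy]
          exact fun x hx => (hCsub hx).2.1
        rw [Finset.mem_sigma]
        constructor
        · rw [mem_chainsIn]
          refine ⟨fun x hx => ⟨(hCsub hx).1, ?_, (hCsub hx).2.2⟩, hCch⟩
          exact lt_of_le_of_lt (hCsub hx).2.1 hyt
        · dsimp only
          rw [hyeq]
          exact hD
      · rintro ⟨C, D⟩ hp
        rw [Finset.mem_sigma] at hp
        obtain ⟨hC, hD⟩ := hp
        obtain ⟨hCsub, hCch⟩ := mem_chainsIn.mp hC
        have hyst : ystar jn b C < t := by
          rw [h.ystar_lt_iff hCch h.q_lt_t]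
          exact fun x hx => (hCsub hx).2.1
        rw [Finset.mem_filter, Finset.mem_sigma, Finset.mem_sigma]
        refine ⟨⟨Finset.mem_filter.mpr ⟨Finset.mem_univ _, h.q_le_ystar C, hyst⟩, ?_, hD⟩,
          by simp⟩
        rw [mem_chainsIn]
        exact ⟨fun x hx => ⟨(hCsub hx).1, h.jn_le_ystar hCch hx, (hCsub hx).2.2⟩, hCch⟩
      · rintro ⟨y, C, D⟩ hp
        rw [Finset.mem_filter, Finset.mem_sigma, Finset.mem_sigma] at hp
        obtain ⟨⟨hy, hC, hD⟩, hnlt⟩ := hp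
        rw [Finset.mem_filter] at hy
        obtain ⟨-, hqy, hyt⟩ := hy
        obtain ⟨hCsub, hCch⟩ := mem_chainsIn.mp hC
        have hyeq : ystar jn b C = y := by
          refine eq_of_le_of_not_lt ?_ hnlt
          rw [h.ystar_le_iff hCch hqy]
          exact fun x hx => (hCsub hx).2.1
        dsimp only
        rw [hyeq]
      · rintro ⟨C, D⟩ hp
        rfl
      · rintro ⟨y, C, D⟩ hp
        rfl
    rw [step1]
    have step15 : ∑ p ∈ (chainsIn {x : Γ | ¬ q ≤ x ∧ jn x < t ∧ x ≠ b}).sigma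
          (fun C => chainsIn {z : Γ | ystar jn b C ≤ z ∧ z ≠ ystar jn b C ∧ z ≠ t}),
          cw ρ (p.1 ∪ p.2) 0 n
        = ∑ C ∈ chainsIn {x : Γ | ¬ q ≤ x ∧ jn x < t ∧ x ≠ b},
            ∑ D ∈ chainsIn {z : Γ | ystar jn b C ≤ z ∧ z ≠ ystar jn b C ∧ z ≠ t},
              cw ρ (C ∪ D) 0 n :=
      Finset.sum_sigma _ _ _
    have step2 : ∀ C ∈ chainsIn {x : Γ | ¬ q ≤ x ∧ jn x < t ∧ x ≠ b},
        (∑ D ∈ chainsIn {z : Γ | ystar jn b C ≤ z ∧ z ≠ ystar jn b C ∧ z ≠ t},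
          cw ρ (C ∪ D) 0 n)
        = cw ρ C 0 n +
          ∑ D ∈ (chainsIn {z : Γ | ystar jn b C ≤ z ∧ z ≠ ystar jn b C ∧ z ≠ t}).erase ∅,
            cw ρ (C ∪ D) 0 n := by
      intro C hC
      rw [← Finset.add_sum_erase _ _ (h.empty_mem_chainsIn _), Finset.union_empty]
    rw [step15, Finset.sum_congr rfl step2, Finset.sum_add_distrib]
    congr 1
    -- the M4 bijection
    rw [Finset.sum_congr rfl (fun y _ => Finset.sum_sigma'
        (chainsIn {x : Γ | ¬ q ≤ x ∧ jn x < y ∧ x ≠ b})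
        (fun _ => chainsIn {z : Γ | y ≤ z ∧ z ≠ y ∧ z ≠ t})
        (fun C D => cw ρ (insert y (C ∪ D)) 0 n)),
      Finset.sum_sigma' (Finset.univ.filter (fun y : Γ => q < y ∧ y < t)),
      Finset.sum_sigma' (chainsIn {x : Γ | ¬ q ≤ x ∧ jn x < t ∧ x ≠ b})]
    refine Finset.sum_nbij'
      (i := fun p => ⟨leastC b p.2, p.1, p.2.erase (leastC b p.2)⟩)
      (j := fun p => ⟨p.2.1, insert p.1 p.2.2⟩) ?_ ?_ ?_ ?_ ?_
    · rintro ⟨C, D⟩ hp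
      rw [Finset.mem_sigma] at hp
      obtain ⟨hC, hD⟩ := hp
      rw [Finset.mem_erase] at hD
      obtain ⟨hDne, hD⟩ := hD
      obtain ⟨hDsub, hDch⟩ := mem_chainsIn.mp hD
      obtain ⟨hCsub, hCch⟩ := mem_chainsIn.mp hC
      obtain ⟨hy1mem, hy1le⟩ := leastC_spec (d := b)
        (exists_least_of_chain hDch (Finset.nonempty_iff_ne_empty.mpr hDne))
      have hy1 : ystar jn b C < leastC b D :=
        lt_of_le_of_ne (hDsub hy1mem).1 (Ne.symm (hDsub hy1mem).2.1)
      rw [Finset.mem_sigma, Finset.mem_sigma]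
      refine ⟨Finset.mem_filter.mpr ⟨Finset.mem_univ _,
        lt_of_le_of_lt (h.q_le_ystar C) hy1,
        lt_of_le_of_ne (h.ht _) (hDsub hy1mem).2.2⟩, ?_, ?_⟩
      · rw [mem_chainsIn]
        refine ⟨fun x hx => ⟨(hCsub hx).1, ?_, (hCsub hx).2.2⟩, hCch⟩
        exact lt_of_le_of_lt (h.jn_le_ystar hCch hx) hy1
      · rw [mem_chainsIn]
        constructor
        · intro z hz
          rw [Finset.mem_coe, Finset.mem_erase] at hz
          exact ⟨hy1le z hz.2, hz.1, (hDsub hz.2).2.2⟩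
        · exact hDch.mono (Finset.coe_subset.mpr (Finset.erase_subset _ _))
    · rintro ⟨y, C, D⟩ hp
      rw [Finset.mem_sigma, Finset.mem_sigma] at hp
      obtain ⟨hy, hC, hD⟩ := hp
      rw [Finset.mem_filter] at hy
      obtain ⟨-, hqy, hyt⟩ := hy
      obtain ⟨hCsub, hCch⟩ := mem_chainsIn.mp hC
      obtain ⟨hDsub, hDch⟩ := mem_chainsIn.mp hD
      have hyst : ystar jn b C < y := by
        rw [h.ystar_lt_iff hCch hqy]
        exact fun x hx => (hCsub hx).2.1
      rw [Finset.mem_sigma]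
      constructor
      · rw [mem_chainsIn]
        refine ⟨fun x hx => ⟨(hCsub hx).1, lt_trans (hCsub hx).2.1 hyt, (hCsub hx).2.2⟩,
          hCch⟩
      · rw [Finset.mem_erase]
        refine ⟨Finset.insert_ne_empty _ _, ?_⟩
        rw [mem_chainsIn]
        constructor
        · intro z hz
          rw [Finset.mem_coe, Finset.mem_insert] at hz
          rcases hz with rfl | hz
          · exact ⟨le_of_lt hyst, fun hh => absurd (hh ▸ hyst) (lt_irrefl _), ne_of_lt hyt⟩
          · have hyz : y ≤ z := (hDsub hz).1
            exact ⟨le_of_lt (lt_of_lt_of_le hyst hyz),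
              fun hh => absurd (hh ▸ lt_of_lt_of_le hyst hyz) (lt_irrefl _),
              (hDsub hz).2.2⟩
        · have := isChain_insert_union (C := (∅ : Finset Γ)) (D := D) (y := y)
            (by simp [IsChain]) hDch (by simp) (fun d hd => (hDsub hd).1)
          rwa [Finset.empty_union] at this
    · rintro ⟨C, D⟩ hp
      rw [Finset.mem_sigma] at hp
      obtain ⟨hC, hD⟩ := hp
      rw [Finset.mem_erase] at hD
      obtain ⟨hDne, hD⟩ := hD
      obtain ⟨hDsub, hDch⟩ := mem_chainsIn.mp hD
      obtain ⟨hy1mem, hy1le⟩ := leastC_spec (d := b)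
        (exists_least_of_chain hDch (Finset.nonempty_iff_ne_empty.mpr hDne))
      dsimp only
      rw [Finset.insert_erase hy1mem]
    · rintro ⟨y, C, D⟩ hp
      rw [Finset.mem_sigma, Finset.mem_sigma] at hp
      obtain ⟨hy, hC, hD⟩ := hp
      obtain ⟨hDsub, hDch⟩ := mem_chainsIn.mp hD
      have hleast : leastC b (insert y D) = y :=
        leastC_eq (Finset.mem_insert_self _ _) (fun x hx => by
          rcases Finset.mem_insert.mp hx with rfl | hx
          · exact le_rfl
          · exact (hDsub hx).1)
      have hyD : y ∉ D := fun hh => (hDsub hh).2.1 rfl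
      dsimp only
      rw [hleast, Finset.erase_insert hyD]
    · rintro ⟨C, D⟩ hp
      rw [Finset.mem_sigma] at hp
      obtain ⟨hC, hD⟩ := hp
      rw [Finset.mem_erase] at hD
      obtain ⟨hDne, hD⟩ := hD
      obtain ⟨hDsub, hDch⟩ := mem_chainsIn.mp hD
      obtain ⟨hy1mem, hy1le⟩ := leastC_spec (d := b)
        (exists_least_of_chain hDch (Finset.nonempty_iff_ne_empty.mpr hDne))
      dsimp only
      rw [← Finset.union_insert, Finset.insert_erase hy1mem]
  rw [hpred, hnpred, Finset.sum_add_distrib]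
  abel

end Setup

namespace Setup

variable {ρ : Γ → ℤ} {b t q : Γ} {jn : Γ → Γ} (h : Setup ρ b t q jn)
include h

open Classical in
lemma piece1 (n : ℕ) (hNt : ρ t = (n : ℤ) + 1) {y : Γ} (hqy : q ≤ y) (hyt : y < t) :
    abPsi {x : Γ | ¬ q ≤ x ∧ jn x ≤ y ∧ x ≠ b} ρ ((ρ y - 1).toNat) * (aGen + bGen)
      * abPsi {z : Γ | y ≤ z ∧ z ≠ y ∧ z ≠ t} (fun z => ρ z - ρ y) ((ρ t - ρ y - 1).toNat)
    = (∑ C ∈ chainsIn {x : Γ | ¬ q ≤ x ∧ jn x ≤ y ∧ x ≠ b},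
        ∑ D ∈ chainsIn {z : Γ | y ≤ z ∧ z ≠ y ∧ z ≠ t},
          cw ρ (insert y (C ∪ D)) 0 n)
      + (∑ C ∈ chainsIn {x : Γ | ¬ q ≤ x ∧ jn x ≤ y ∧ x ≠ b},
        ∑ D ∈ chainsIn {z : Γ | y ≤ z ∧ z ≠ y ∧ z ≠ t},
          cw ρ (insert y (C ∪ D)) 0 n)
      + ∑ C ∈ chainsIn {x : Γ | ¬ q ≤ x ∧ jn x ≤ y ∧ x ≠ b},
        ∑ D ∈ chainsIn {z : Γ | y ≤ z ∧ z ≠ y ∧ z ≠ t},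
          cw ρ (C ∪ D) 0 n := by
  classical
  have hyb : y ≠ b := h.ne_b_of_q_le hqy
  have hr1 : 1 ≤ ρ y := h.rank_pos hyb
  have hrn : ρ y ≤ (n : ℤ) := by have := h.rank_lt_top (ne_of_lt hyt); omega
  set r : ℕ := (ρ y).toNat with hrdef
  have hρy : ρ y = (r : ℤ) := by omega
  have e1 : (ρ y - 1).toNat = r - 1 := by omega
  have e2 : (ρ t - ρ y - 1).toNat = n - (r - 1) - 1 := by omega
  rw [e1, e2]
  -- rank facts for elements
  have hCfact : ∀ x : Γ, x ∈ {x : Γ | ¬ q ≤ x ∧ jn x ≤ y ∧ x ≠ b} →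
      1 ≤ ρ x ∧ ρ x ≤ ((r - 1 : ℕ) : ℤ) := by
    intro x hx
    obtain ⟨hnq, hjxy, hxb⟩ := hx
    have hxy : x < y := by
      refine lt_of_le_of_ne (le_trans (h.le_jn x) hjxy) ?_
      rintro rfl
      exact hnq hqy
    have := h.mono hxy
    have := h.rank_pos hxb
    constructor <;> omega
  have hDfact : ∀ z : Γ, z ∈ {z : Γ | y ≤ z ∧ z ≠ y ∧ z ≠ t} →
      ((r - 1 : ℕ) : ℤ) + 2 ≤ ρ z ∧ ρ z ≤ (n : ℤ) := by
    intro z hz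
    obtain ⟨hyz, hzy, hzt⟩ := hz
    have h1 := h.mono (lt_of_le_of_ne hyz (Ne.symm hzy))
    have h2 := h.rank_lt_top hzt
    constructor <;> omega
  rw [abPsi_eq_sum {x : Γ | ¬ q ≤ x ∧ jn x ≤ y ∧ x ≠ b} ρ ρ 0 (r - 1)
      (fun z _ => by ring)
      (fun x hx x' hx' hlt => h.mono hlt)
      (fun x hx => by have := hCfact x hx; constructor <;> omega),
    abPsi_eq_sum {z : Γ | y ≤ z ∧ z ≠ y ∧ z ≠ t} ρ (fun z => ρ z - ρ y)
      (((r - 1 : ℕ) : ℤ) + 1) (n - (r - 1) - 1)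
      (fun z _ => by rw [hρy]; push_cast; omega)
      (fun x hx x' hx' hlt => h.mono hlt)
      (fun x hx => by have := hDfact x hx; constructor <;> omega)]
  rw [Finset.sum_mul, Finset.sum_mul_sum]
  have hper : ∀ C ∈ chainsIn {x : Γ | ¬ q ≤ x ∧ jn x ≤ y ∧ x ≠ b},
      ∀ D ∈ chainsIn {z : Γ | y ≤ z ∧ z ≠ y ∧ z ≠ t},
      cw ρ C 0 (r - 1) * (aGen + bGen) * cw ρ D (((r - 1 : ℕ) : ℤ) + 1) (n - (r - 1) - 1)
      = cw ρ (insert y (C ∪ D)) 0 n + cw ρ (insert y (C ∪ D)) 0 n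
        + cw ρ (C ∪ D) 0 n := by
    intro C hC D hD
    obtain ⟨hCsub, -⟩ := mem_chainsIn.mp hC
    obtain ⟨hDsub, -⟩ := mem_chainsIn.mp hD
    have hmn : r - 1 < n := by omega
    have hyρ : ρ y = ((r - 1 : ℕ) : ℤ) + 1 := by omega
    rw [← cw_merge_b ρ C D y (r - 1) n hmn hyρ
        (fun x hx => hCfact x (hCsub hx)) (fun z hz => hDfact z (hDsub hz)),
      ← cw_merge_c ρ C D (r - 1) n hmn
        (fun x hx => hCfact x (hCsub hx)) (fun z hz => hDfact z (hDsub hz))]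
    noncomm_ring
  calc ∑ C ∈ chainsIn {x : Γ | ¬ q ≤ x ∧ jn x ≤ y ∧ x ≠ b},
        ∑ D ∈ chainsIn {z : Γ | y ≤ z ∧ z ≠ y ∧ z ≠ t},
          cw ρ C 0 (r - 1) * (aGen + bGen)
            * cw ρ D (((r - 1 : ℕ) : ℤ) + 1) (n - (r - 1) - 1)
      = ∑ C ∈ chainsIn {x : Γ | ¬ q ≤ x ∧ jn x ≤ y ∧ x ≠ b},
        ∑ D ∈ chainsIn {z : Γ | y ≤ z ∧ z ≠ y ∧ z ≠ t},
          (cw ρ (insert y (C ∪ D)) 0 n + cw ρ (insert y (C ∪ D)) 0 n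
            + cw ρ (C ∪ D) 0 n) := by
        exact Finset.sum_congr rfl fun C hC => Finset.sum_congr rfl fun D hD =>
          hper C hC D hD
    _ = _ := by simp only [Finset.sum_add_distrib]

open Classical in
lemma piece2 (n : ℕ) (hNt : ρ t = (n : ℤ) + 1) {y : Γ} (hqy : q < y) (hyt : y < t) :
    (localAbPsi {x : Γ | ¬ q ≤ x ∧ jn x ≤ y ∧ x ≠ b} {x : Γ | ¬ q ≤ x ∧ jn x < y ∧ x ≠ b}
        ρ ((ρ y - 1).toNat) * (aGen + bGen)
      + abPsi {x : Γ | ¬ q ≤ x ∧ jn x < y ∧ x ≠ b} ρ ((ρ y - 2).toNat)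
        * (aGen * bGen + bGen * aGen))
      * abPsi {z : Γ | y ≤ z ∧ z ≠ y ∧ z ≠ t} (fun z => ρ z - ρ y) ((ρ t - ρ y - 1).toNat)
    = ((∑ C ∈ chainsIn {x : Γ | ¬ q ≤ x ∧ jn x ≤ y ∧ x ≠ b},
        ∑ D ∈ chainsIn {z : Γ | y ≤ z ∧ z ≠ y ∧ z ≠ t},
          cw ρ (insert y (C ∪ D)) 0 n)
      + (∑ C ∈ chainsIn {x : Γ | ¬ q ≤ x ∧ jn x ≤ y ∧ x ≠ b},
        ∑ D ∈ chainsIn {z : Γ | y ≤ z ∧ z ≠ y ∧ z ≠ t},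
          cw ρ (insert y (C ∪ D)) 0 n)
      + ∑ C ∈ chainsIn {x : Γ | ¬ q ≤ x ∧ jn x ≤ y ∧ x ≠ b},
        ∑ D ∈ chainsIn {z : Γ | y ≤ z ∧ z ≠ y ∧ z ≠ t},
          cw ρ (C ∪ D) 0 n)
    - ((∑ C ∈ chainsIn {x : Γ | ¬ q ≤ x ∧ jn x < y ∧ x ≠ b},
        ∑ D ∈ chainsIn {z : Γ | y ≤ z ∧ z ≠ y ∧ z ≠ t},
          cw ρ (C ∪ D) 0 n)
      + ∑ C ∈ chainsIn {x : Γ | ¬ q ≤ x ∧ jn x < y ∧ x ≠ b},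
        ∑ D ∈ chainsIn {z : Γ | y ≤ z ∧ z ≠ y ∧ z ≠ t},
          cw ρ (insert y (C ∪ D)) 0 n) := by
  classical
  have hyb : y ≠ b := h.ne_b_of_q_le (le_of_lt hqy)
  have hρq : 1 ≤ ρ q := h.rank_pos h.hqb
  have hr2 : 2 ≤ ρ y := by have := h.mono hqy; omega
  have hrn : ρ y ≤ (n : ℤ) := by have := h.rank_lt_top (ne_of_lt hyt); omega
  set r : ℕ := (ρ y).toNat with hrdef
  have hρy : ρ y = (r : ℤ) := by omega
  have e1 : (ρ y - 1).toNat = r - 1 := by omega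
  have e15 : (ρ y - 1).toNat - 1 = (ρ y - 2).toNat := by omega
  have e16 : (ρ y - 2).toNat = r - 2 := by omega
  have e2 : (ρ t - ρ y - 1).toNat = n - (r - 1) - 1 := by omega
  rw [localAbPsi_eq _ _ _ _ (by omega : 1 ≤ (ρ y - 1).toNat), e15, e1, e16, e2]
  have hCfact : ∀ x : Γ, x ∈ {x : Γ | ¬ q ≤ x ∧ jn x ≤ y ∧ x ≠ b} →
      1 ≤ ρ x ∧ ρ x ≤ ((r - 1 : ℕ) : ℤ) := by
    intro x hx
    obtain ⟨hnq, hjxy, hxb⟩ := hx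
    have hxy : x < y := by
      refine lt_of_le_of_ne (le_trans (h.le_jn x) hjxy) ?_
      rintro rfl
      exact hnq (le_of_lt hqy)
    have := h.mono hxy
    have := h.rank_pos hxb
    constructor <;> omega
  have hC2fact : ∀ x : Γ, x ∈ {x : Γ | ¬ q ≤ x ∧ jn x < y ∧ x ≠ b} →
      1 ≤ ρ x ∧ ρ x ≤ ((r - 2 : ℕ) : ℤ) := by
    intro x hx
    obtain ⟨hnq, hjxy, hxb⟩ := hx
    have h1 := h.mono (h.lt_jn hnq)
    have h2 := h.mono hjxy
    have := h.rank_pos hxb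
    constructor <;> omega
  have hDfact : ∀ z : Γ, z ∈ {z : Γ | y ≤ z ∧ z ≠ y ∧ z ≠ t} →
      ((r - 1 : ℕ) : ℤ) + 2 ≤ ρ z ∧ ρ z ≤ (n : ℤ) := by
    intro z hz
    obtain ⟨hyz, hzy, hzt⟩ := hz
    have h1 := h.mono (lt_of_le_of_ne hyz (Ne.symm hzy))
    have h2 := h.rank_lt_top hzt
    constructor <;> omega
  rw [abPsi_eq_sum {x : Γ | ¬ q ≤ x ∧ jn x ≤ y ∧ x ≠ b} ρ ρ 0 (r - 1)
      (fun z _ => by ring)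
      (fun x hx x' hx' hlt => h.mono hlt)
      (fun x hx => by have := hCfact x hx; constructor <;> omega),
    abPsi_eq_sum {x : Γ | ¬ q ≤ x ∧ jn x < y ∧ x ≠ b} ρ ρ 0 (r - 2)
      (fun z _ => by ring)
      (fun x hx x' hx' hlt => h.mono hlt)
      (fun x hx => by have := hC2fact x hx; constructor <;> omega),
    abPsi_eq_sum {z : Γ | y ≤ z ∧ z ≠ y ∧ z ≠ t} ρ (fun z => ρ z - ρ y)
      (((r - 1 : ℕ) : ℤ) + 1) (n - (r - 1) - 1)
      (fun z _ => by rw [hρy]; push_cast; omega)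
      (fun x hx x' hx' hlt => h.mono hlt)
      (fun x hx => by have := hDfact x hx; constructor <;> omega)]
  -- abbreviate the three chain sums
  set SA := ∑ C ∈ chainsIn {x : Γ | ¬ q ≤ x ∧ jn x ≤ y ∧ x ≠ b}, cw ρ C 0 (r - 1) with hSA
  set SB := ∑ C ∈ chainsIn {x : Γ | ¬ q ≤ x ∧ jn x < y ∧ x ≠ b}, cw ρ C 0 (r - 2) with hSB
  set SP := ∑ D ∈ chainsIn {z : Γ | y ≤ z ∧ z ≠ y ∧ z ≠ t},
      cw ρ D (((r - 1 : ℕ) : ℤ) + 1) (n - (r - 1) - 1) with hSP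
  have hmn : r - 1 < n := by omega
  have hmn2 : (r - 2) + 1 < n := by omega
  have hyρ1 : ρ y = ((r - 1 : ℕ) : ℤ) + 1 := by omega
  have hyρ2 : ρ y = ((r - 2 : ℕ) : ℤ) + 2 := by omega
  have hM1 : SA * (bGen * SP)
      = ∑ C ∈ chainsIn {x : Γ | ¬ q ≤ x ∧ jn x ≤ y ∧ x ≠ b},
          ∑ D ∈ chainsIn {z : Γ | y ≤ z ∧ z ≠ y ∧ z ≠ t},
            cw ρ (insert y (C ∪ D)) 0 n := by
    rw [hSA, hSP, Finset.mul_sum, Finset.sum_mul_sum]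
    refine Finset.sum_congr rfl fun C hC => Finset.sum_congr rfl fun D hD => ?_
    obtain ⟨hCsub, -⟩ := mem_chainsIn.mp hC
    obtain ⟨hDsub, -⟩ := mem_chainsIn.mp hD
    exact cw_merge_b ρ C D y (r - 1) n hmn hyρ1
      (fun x hx => hCfact x (hCsub hx)) (fun z hz => hDfact z (hDsub hz))
  have hM2 : SA * ((aGen - bGen) * SP)
      = ∑ C ∈ chainsIn {x : Γ | ¬ q ≤ x ∧ jn x ≤ y ∧ x ≠ b},
          ∑ D ∈ chainsIn {z : Γ | y ≤ z ∧ z ≠ y ∧ z ≠ t},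
            cw ρ (C ∪ D) 0 n := by
    rw [hSA, hSP, Finset.mul_sum, Finset.sum_mul_sum]
    refine Finset.sum_congr rfl fun C hC => Finset.sum_congr rfl fun D hD => ?_
    obtain ⟨hCsub, -⟩ := mem_chainsIn.mp hC
    obtain ⟨hDsub, -⟩ := mem_chainsIn.mp hD
    exact cw_merge_c ρ C D (r - 1) n hmn
      (fun x hx => hCfact x (hCsub hx)) (fun z hz => hDfact z (hDsub hz))
  have hDconv : ∀ D : Finset Γ, cw ρ D (((r - 1 : ℕ) : ℤ) + 1) (n - (r - 1) - 1)
      = cw ρ D (((r - 2 : ℕ) : ℤ) + 2) (n - (r - 2) - 2) := by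
    intro D
    rw [show n - (r - 1) - 1 = n - (r - 2) - 2 by omega]
    exact cw_congr' (by push_cast; omega) (fun i _ => Iff.rfl)
  have hM3 : SB * ((aGen - bGen) * ((aGen - bGen) * SP))
      = ∑ C ∈ chainsIn {x : Γ | ¬ q ≤ x ∧ jn x < y ∧ x ≠ b},
          ∑ D ∈ chainsIn {z : Γ | y ≤ z ∧ z ≠ y ∧ z ≠ t},
            cw ρ (C ∪ D) 0 n := by
    rw [hSB, hSP, Finset.mul_sum, Finset.mul_sum, Finset.sum_mul_sum]
    refine Finset.sum_congr rfl fun C hC => Finset.sum_congr rfl fun D hD => ?_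
    obtain ⟨hCsub, -⟩ := mem_chainsIn.mp hC
    obtain ⟨hDsub, -⟩ := mem_chainsIn.mp hD
    rw [hDconv D]
    exact cw_merge_cc ρ C D (r - 2) n hmn2
      (fun x hx => hC2fact x (hCsub hx))
      (fun z hz => by have := hDfact z (hDsub hz); constructor <;> [push_cast; omega] <;> omega)
  have hM4 : SB * ((aGen - bGen) * (bGen * SP))
      = ∑ C ∈ chainsIn {x : Γ | ¬ q ≤ x ∧ jn x < y ∧ x ≠ b},
          ∑ D ∈ chainsIn {z : Γ | y ≤ z ∧ z ≠ y ∧ z ≠ t},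
            cw ρ (insert y (C ∪ D)) 0 n := by
    rw [hSB, hSP, Finset.mul_sum, Finset.mul_sum, Finset.sum_mul_sum]
    refine Finset.sum_congr rfl fun C hC => Finset.sum_congr rfl fun D hD => ?_
    obtain ⟨hCsub, -⟩ := mem_chainsIn.mp hC
    obtain ⟨hDsub, -⟩ := mem_chainsIn.mp hD
    rw [hDconv D]
    exact cw_merge_cb ρ C D y (r - 2) n hmn2 hyρ2
      (fun x hx => hC2fact x (hCsub hx))
      (fun z hz => by have := hDfact z (hDsub hz); constructor <;> [push_cast; omega] <;> omega)
  rw [← hM1, ← hM2, ← hM3, ← hM4]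
  noncomm_ring

end Setup

lemma rank_strictMono {ρ : Γ → ℤ} (hrk : IsRankFunction ρ) :
    ∀ ⦃x y : Γ⦄, x < y → ρ x < ρ y := by
  classical
  have key : ∀ k : ℕ, ∀ x y : Γ, x < y →
      (Finset.univ.filter (fun z => x < z ∧ z ≤ y)).card ≤ k → ρ x < ρ y := by
    intro k
    induction k with
    | zero =>
      intro x y hxy hcard
      exfalso
      have hmem : y ∈ Finset.univ.filter (fun z => x < z ∧ z ≤ y) := by
        simp [hxy]
      have := Finset.card_pos.mpr ⟨y, hmem⟩
      omega
    | succ k ih =>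
      intro x y hxy hcard
      obtain ⟨z, hz, hzmin⟩ : ∃ z ∈ Finset.univ.filter (fun z => x < z ∧ z ≤ y),
          ∀ w ∈ Finset.univ.filter (fun z => x < z ∧ z ≤ y), ¬w < z := by
        obtain ⟨z, hz⟩ := Finset.exists_minimal
          (⟨y, by simp [hxy]⟩ : (Finset.univ.filter (fun z => x < z ∧ z ≤ y)).Nonempty)
        exact ⟨z, hz.prop, fun w hw hlt => lt_irrefl _ (lt_of_lt_of_le hlt (hz.2 hw hlt.le))⟩
      rw [Finset.mem_filter] at hz
      obtain ⟨-, hxz, hzy⟩ := hz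
      have hcov : x ⋖ z := by
        refine ⟨hxz, fun w hxw hwz => ?_⟩
        exact hzmin w (Finset.mem_filter.mpr ⟨Finset.mem_univ _, hxw,
          le_trans (le_of_lt hwz) hzy⟩) hwz
      have hρz : ρ z = ρ x + 1 := hrk hcov
      rcases eq_or_lt_of_le hzy with rfl | hzy'
      · omega
      · have hsub : (Finset.univ.filter (fun w => z < w ∧ w ≤ y)) ⊂
            (Finset.univ.filter (fun w => x < w ∧ w ≤ y)) := by
          refine (Finset.ssubset_iff_of_subset ?_).mpr ?_
          · intro w hw
            rw [Finset.mem_filter] at hw ⊢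
            exact ⟨hw.1, lt_trans hxz hw.2.1, hw.2.2⟩
          · exact ⟨z, Finset.mem_filter.mpr ⟨Finset.mem_univ _, hxz, hzy⟩,
              by simp⟩
        have hc := Finset.card_lt_card hsub
        have := ih z y hzy' (by omega)
        omega
  intro x y hxy
  exact key _ x y hxy le_rfl

lemma final_algebra (A P1a Pab Pamb W1 W2 S1 S2 S3 S4 Bd : ABAlg)
    (hP2 : W2 + S2 = Bd + (S3 + S4))
    (hBd : Pamb = Bd)
    (hPP : Pab + Pamb = P1a + P1a) :
    A + (W1 + S1)
      = A - P1a + (1 / 2 : ℚ) • (Pab + (W1 + W1 + W2) + (S1 + S1 + S2 - (S3 + S4))) := by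
  have e2 : S2 = Bd + (S3 + S4) - W2 := by rw [← hP2]; abel
  have hX : Pab + (W1 + W1 + W2) + (S1 + S1 + S2 - (S3 + S4))
      = (P1a + (W1 + S1)) + (P1a + (W1 + S1)) := by
    calc Pab + (W1 + W1 + W2) + (S1 + S1 + S2 - (S3 + S4))
        = (Pab + Pamb) + (W1 + W1) + (S1 + S1) := by rw [e2, hBd]; abel
      _ = (P1a + P1a) + (W1 + W1) + (S1 + S1) := by rw [hPP]
      _ = (P1a + (W1 + S1)) + (P1a + (W1 + S1)) := by abel
  rw [hX, show (P1a + (W1 + S1)) + (P1a + (W1 + S1)) = (2 : ℚ) • (P1a + (W1 + S1)) from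
    (two_smul ℚ _).symm, smul_smul]
  norm_num
  abel

end Aux

/-- Let `Γ` be a finite Eulerian poset of positive rank with natural
rank function `ρ` (bottom `b` of rank `0`, top `t` of rank `N`), and let `q ∉ {b, t}` be
join-admissible with join function `jn`.  With `X = Γ ∖ Γ_{≥q}`, `Y = Γ_{≥q} = [q, t]`,
`X_{≤y} = {x ∈ X : x ∨ q ≤ y}`, `X_{<y} = {x ∈ X : x ∨ q < y}` and `∂X = X_{<t}`, the
following identity holds in `ℚ⟨a,b⟩`:
`Ψ(Γ) = ℓΨ(X) + ½[Ψ(∂X̄)(a+b) + Ψ([b,q])(a+b)Ψ([q,t])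
        + ∑_{q<y<t} (ℓΨ(X_{≤y})(a+b) + Ψ(X̄_{<y})(ab+ba)) Ψ([y,t])]`,
each interval being regarded as an Eulerian poset with its natural rank function. -/
theorem abPsi_formula {Γ : Type*} [PartialOrder Γ] [Finite Γ]
    (ρ : Γ → ℤ) (b t : Γ) (hb : ∀ z : Γ, b ≤ z) (ht : ∀ z : Γ, z ≤ t)
    (hEul : Eulerian ρ) (hρb : ρ b = 0) (hrk : 0 < posetRank Γ)
    (N : ℕ) (hN : ρ t = (N : ℤ))
    (q : Γ) (hqb : q ≠ b) (hqt : q ≠ t)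
    (jn : Γ → Γ) (hjn : ∀ z : Γ, IsLeast {w : Γ | z ≤ w ∧ q ≤ w} (jn z)) :
    abPsi {z : Γ | z ≠ b ∧ z ≠ t} ρ (N - 1) =
      localAbPsi {x : Γ | ¬ q ≤ x ∧ x ≠ b} {x : Γ | ¬ q ≤ x ∧ jn x < t ∧ x ≠ b} ρ (N - 1)
      + (1 / 2 : ℚ) • (
          abPsi {x : Γ | ¬ q ≤ x ∧ jn x < t ∧ x ≠ b} ρ (N - 2) * (aGen + bGen)
          + abPsi {z : Γ | z ≤ q ∧ z ≠ b ∧ z ≠ q} ρ ((ρ q - 1).toNat)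
              * (aGen + bGen)
              * abPsi {z : Γ | q ≤ z ∧ z ≠ q ∧ z ≠ t} (fun z => ρ z - ρ q)
                  ((ρ t - ρ q - 1).toNat)
          + ∑ᶠ (y : Γ) (_ : q < y ∧ y < t),
              ( localAbPsi {x : Γ | ¬ q ≤ x ∧ jn x ≤ y ∧ x ≠ b}
                    {x : Γ | ¬ q ≤ x ∧ jn x < y ∧ x ≠ b} ρ ((ρ y - 1).toNat)
                  * (aGen + bGen)
                + abPsi {x : Γ | ¬ q ≤ x ∧ jn x < y ∧ x ≠ b} ρ ((ρ y - 2).toNat)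
                    * (aGen * bGen + bGen * aGen) )
              * abPsi {z : Γ | y ≤ z ∧ z ≠ y ∧ z ≠ t} (fun z => ρ z - ρ y)
                  ((ρ t - ρ y - 1).toNat) ) := by
  classical
  cases nonempty_fintype Γ
  have hmono := rank_strictMono hEul.1.1
  have hset : Setup ρ b t q jn := ⟨hmono, hb, ht, hρb, hjn, hqb, hqt⟩
  have hqt' : q < t := hset.q_lt_t
  have hρq1 : 1 ≤ ρ q := hset.rank_pos hqb
  have hρqN : ρ q < ρ t := hset.rank_lt_top hqt
  have hN2 : 2 ≤ N := by rw [hN] at hρqN; omega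
  set n : ℕ := N - 1 with hndef
  have hNt : ρ t = (n : ℤ) + 1 := by rw [hN]; push_cast; omega
  -- finsum over y → Finset sum
  rw [finsum_cond_eq_sum_of_cond_iff
    (t := Finset.univ.filter (fun y : Γ => q < y ∧ y < t)) _
    (fun {y} _ => by simp)]
  -- localAbPsi main
  rw [show N - 2 = n - 1 by omega]
  rw [localAbPsi_eq {x : Γ | ¬ q ≤ x ∧ x ≠ b} {x : Γ | ¬ q ≤ x ∧ jn x < t ∧ x ≠ b} ρ n
    (by omega)]
  -- per-y terms via piece2
  rw [Finset.sum_congr rfl (fun y hy =>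
    hset.piece2 n hNt (Finset.mem_filter.mp hy).2.1 (Finset.mem_filter.mp hy).2.2)]
  -- q-term
  have hbqset : {z : Γ | z ≤ q ∧ z ≠ b ∧ z ≠ q} = {x : Γ | ¬ q ≤ x ∧ jn x ≤ q ∧ x ≠ b} := by
    ext z
    simp only [Set.mem_setOf_eq]
    constructor
    · rintro ⟨hzq, hzb, hzq'⟩
      exact ⟨fun hq => hzq' (le_antisymm hzq hq), hset.jn_le hzq le_rfl, hzb⟩
    · rintro ⟨hnq, hjq, hzb⟩
      have hz : z ≤ q := le_trans (hset.le_jn z) hjq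
      exact ⟨hz, hzb, fun hh => hnq (hh ▸ le_rfl)⟩
  rw [hbqset, hset.piece1 n hNt le_rfl hqt']
  -- abPsi conversions
  rw [abPsi_eq_sum {z : Γ | z ≠ b ∧ z ≠ t} ρ ρ 0 n (fun z _ => by ring)
      (fun x _ x' _ hlt => hmono hlt)
      (fun x hx => ⟨by have := hset.rank_pos hx.1; omega,
        by have := hset.rank_lt_top hx.2; omega⟩),
    abPsi_eq_sum {x : Γ | ¬ q ≤ x ∧ x ≠ b} ρ ρ 0 n (fun z _ => by ring)
      (fun x _ x' _ hlt => hmono hlt)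
      (fun x hx => ⟨by have := hset.rank_pos hx.2; omega,
        by
          have hxt : x ≠ t := fun hh => hx.1 (hh ▸ ht q)
          have := hset.rank_lt_top hxt; omega⟩),
    abPsi_eq_sum {x : Γ | ¬ q ≤ x ∧ jn x < t ∧ x ≠ b} ρ ρ 0 (n - 1) (fun z _ => by ring)
      (fun x _ x' _ hlt => hmono hlt)
      (fun x hx => ⟨by have := hset.rank_pos hx.2.2; omega,
        by
          have h1 := hmono (hset.lt_jn hx.1)
          have h2 := hset.rank_lt_top (ne_of_lt hx.2.1)
          omega⟩)]
  -- split the R-sum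
  simp only [Finset.sum_sub_distrib, Finset.sum_add_distrib]
  -- main combinatorial identities
  have hsplit : (Finset.univ.filter (fun y : Γ => q ≤ y ∧ y < t))
      = insert q (Finset.univ.filter (fun y : Γ => q < y ∧ y < t)) := by
    ext y
    simp only [Finset.mem_filter, Finset.mem_insert, Finset.mem_univ, true_and]
    constructor
    · rintro ⟨hqy, hyt⟩
      rcases eq_or_lt_of_le hqy with rfl | h'
      · exact Or.inl rfl
      · exact Or.inr ⟨h', hyt⟩
    · rintro (rfl | ⟨h1, h2⟩)
      · exact ⟨le_rfl, hqt'⟩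
      · exact ⟨le_of_lt h1, h2⟩
  have hqR : q ∉ Finset.univ.filter (fun y : Γ => q < y ∧ y < t) := by simp
  have hP1 := hset.P1 n
  rw [hsplit, Finset.sum_insert hqR] at hP1
  have hP2 := hset.P2 n
  rw [hsplit, Finset.sum_insert hqR] at hP2
  simp only [Finset.sum_add_distrib] at hP2
  have hBd : (∑ C ∈ chainsIn {x : Γ | ¬ q ≤ x ∧ jn x < t ∧ x ≠ b}, cw ρ C 0 (n - 1))
      * (aGen - bGen)
      = ∑ C ∈ chainsIn {x : Γ | ¬ q ≤ x ∧ jn x < t ∧ x ≠ b}, cw ρ C 0 n := by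
    rw [Finset.sum_mul]
    refine Finset.sum_congr rfl fun C hC => ?_
    obtain ⟨hCsub, -⟩ := mem_chainsIn.mp hC
    have hno : ¬ ∃ x ∈ C, ρ x = 0 + ((n - 1 : ℕ) : ℤ) + 1 := by
      rintro ⟨x, hx, hval⟩
      have h1 := hmono (hset.lt_jn (hCsub hx).1)
      have h2 := hset.rank_lt_top (ne_of_lt (hCsub hx).2.1)
      omega
    rw [cw_split ρ C 0 (n - 1) n (by omega), show n - (n - 1) - 1 = 0 by omega, cw_zero,
      mul_one, if_neg hno]
  rw [hP1]
  exact final_algebra _ _ _ _ _ _ _ _ _ _ _ hP2 hBd (by noncomm_ring)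

end SFSPaper
end
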